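/- arXiv:0704.3469 — 4 statements merged into one kernel-verified Lean document; each statement's English description precedes it below -/
import Mathlib

section
/- The number of permutations of {1,...,n+1} avoiding 321 and 3412 equals the odd-indexed Fibonacci number F_{2n+1} (with F_1 = F_2 = 1), i.e., the sequence 1, 2, 5, 13, 34, 89, ... -/
/-- `w` contains `p` as a (classical, 1-line) permutation pattern. -/
def ContainsPattern {n k : ℕ} (w : Equiv.Perm (Fin n)) (p : Equiv.Perm (Fin k)) : Prop :=
  ∃ f : Fin k ↪o Fin n, ∀ a b : Fin k, p a < p b ↔ w (f a) < w (f b)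

/-- `w` avoids the pattern `p`. -/
def AvoidsPattern {n k : ℕ} (w : Equiv.Perm (Fin n)) (p : Equiv.Perm (Fin k)) : Prop :=
  ¬ ContainsPattern w p

noncomputable def p321 : Equiv.Perm (Fin 3) := Equiv.ofBijective ![2,1,0] (by decide)
noncomputable def p3412 : Equiv.Perm (Fin 4) := Equiv.ofBijective ![2,3,0,1] (by decide)
noncomputable def p3421 : Equiv.Perm (Fin 4) := Equiv.ofBijective ![2,3,1,0] (by decide)
noncomputable def p4312 : Equiv.Perm (Fin 4) := Equiv.ofBijective ![3,2,0,1] (by decide)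
noncomputable def p4321 : Equiv.Perm (Fin 4) := Equiv.ofBijective ![3,2,1,0] (by decide)
noncomputable def p4231 : Equiv.Perm (Fin 4) := Equiv.ofBijective ![3,1,2,0] (by decide)
noncomputable def p356124 : Equiv.Perm (Fin 6) := Equiv.ofBijective ![2,4,5,0,1,3] (by decide)
noncomputable def p456123 : Equiv.Perm (Fin 6) := Equiv.ofBijective ![3,4,5,0,1,2] (by decide)
noncomputable def p46718235 : Equiv.Perm (Fin 8) := Equiv.ofBijective ![3,5,6,0,7,1,2,4] (by decide)
noncomputable def p46781235 : Equiv.Perm (Fin 8) := Equiv.ofBijective ![3,5,6,7,0,1,2,4] (by decide)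
noncomputable def p56718234 : Equiv.Perm (Fin 8) := Equiv.ofBijective ![4,5,6,0,7,1,2,3] (by decide)
noncomputable def p56781234 : Equiv.Perm (Fin 8) := Equiv.ofBijective ![4,5,6,7,0,1,2,3] (by decide)

lemma contains321_iff {n : ℕ} (w : Equiv.Perm (Fin n)) :
    ContainsPattern w p321 ↔ ∃ i j l : Fin n, i < j ∧ j < l ∧ w l < w j ∧ w j < w i := by
  constructor
  · rintro ⟨f, hf⟩
    refine ⟨f 0, f 1, f 2, f.strictMono (by decide), f.strictMono (by decide), ?_, ?_⟩
    · rw [← hf 2 1]; simp [p321]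
    · rw [← hf 1 0]; simp [p321]
  · rintro ⟨i, j, l, hij, hjl, h1, h2⟩
    have h3 := h1.trans h2
    have hmono : StrictMono (![i, j, l] : Fin 3 → Fin n) := by
      intro a b hab
      fin_cases a <;> fin_cases b <;> simp_all <;> first | exact hij | exact hjl | exact hij.trans hjl | exact absurd hab (by decide)
    refine ⟨OrderEmbedding.ofStrictMono _ hmono, ?_⟩
    intro a b
    fin_cases a <;> fin_cases b <;>
      simp [p321, OrderEmbedding.ofStrictMono, Equiv.ofBijective] <;>
      first | exact h1 | exact h2 | exact h3 | exact h1.le | exact h2.le | exact h3.le | decide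

lemma contains3412_iff {n : ℕ} (w : Equiv.Perm (Fin n)) :
    ContainsPattern w p3412 ↔
      ∃ i j l m : Fin n, i < j ∧ j < l ∧ l < m ∧ w l < w m ∧ w m < w i ∧ w i < w j := by
  constructor
  · rintro ⟨f, hf⟩
    refine ⟨f 0, f 1, f 2, f 3, f.strictMono (by decide), f.strictMono (by decide),
      f.strictMono (by decide), ?_, ?_, ?_⟩
    · rw [← hf 2 3]; simp [p3412]
    · rw [← hf 3 0]; simp [p3412]
    · rw [← hf 0 1]; simp [p3412]
  · rintro ⟨i, j, l, m, hij, hjl, hlm, h1, h2, h3⟩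
    have h4 := h1.trans h2   -- w l < w i
    have h5 := h2.trans h3   -- w m < w j
    have h6 := h4.trans h3   -- w l < w j
    have hmono : StrictMono (![i, j, l, m] : Fin 4 → Fin n) := by
      intro a b hab
      fin_cases a <;> fin_cases b <;> simp_all <;> first | exact hij | exact hjl | exact hlm | exact hij.trans hjl | exact hjl.trans hlm | exact (hij.trans hjl).trans hlm
    refine ⟨OrderEmbedding.ofStrictMono _ hmono, ?_⟩
    intro a b
    fin_cases a <;> fin_cases b <;>
      simp [p3412, OrderEmbedding.ofStrictMono, Equiv.ofBijective] <;>
      first | exact h1 | exact h2 | exact h3 | exact h4 | exact h5 | exact h6 | exact h1.le | exact h2.le | exact h3.le | exact h4.le | exact h5.le | exact h6.le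


def Good {n : ℕ} (w : Equiv.Perm (Fin n)) : Prop :=
  (∀ i j l : Fin n, i < j → j < l → w l < w j → ¬ w j < w i) ∧
  (∀ i j l m : Fin n, i < j → j < l → l < m → w l < w m → w m < w i → ¬ w i < w j)

/-- value relabeling for the tail -/
def gval (k j : ℕ) : ℕ := if j = 0 then k - 1 else k + j

lemma gval_lt {k j j' : ℕ} (hk : 1 ≤ k) : gval k j < gval k j' ↔ j < j' := by
  unfold gval; split_ifs <;> omega

lemma gval_ge {k j : ℕ} : k - 1 ≤ gval k j := by unfold gval; split_ifs <;> omega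

lemma gval_ne {k j : ℕ} (hk : 1 ≤ k) : gval k j ≠ k := by unfold gval; split_ifs <;> omega

lemma gval_inj {k j j' : ℕ} (hk : 1 ≤ k) (h : gval k j = gval k j') : j = j' := by
  revert h; unfold gval; split_ifs <;> omega

lemma struct {n : ℕ} (w : Equiv.Perm (Fin (n+1))) (hw : Good w) (k : ℕ)
    (hk : (w 0).val = k) :
    ∀ c : ℕ, ∀ i : Fin (n+1), i.val = c → 1 ≤ c → c < k → (w i).val = c - 1 := by
  have hkn : k ≤ n := by have := (w 0).isLt; omega
  have h00 : (0 : Fin (n+1)).val = 0 := rfl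
  intro c
  induction c using Nat.strong_induction_on with
  | _ c IH =>
  intro i hic h1c hck
  by_contra hb
  have hk2 : 2 ≤ k := by omega
  have hi0 : i ≠ 0 := by intro h; subst h; omega
  have hbk : (w i).val ≠ k := by
    intro h
    apply hi0
    have : w i = w 0 := Fin.ext (by omega)
    exact w.injective this
  have hprev : ∀ j : Fin (n+1), 1 ≤ j.val → j.val < c → (w j).val = j.val - 1 := by
    intro j hj1 hjc; exact IH j.val hjc j rfl hj1 (by omega)
  have hbge : c ≤ (w i).val := by
    by_contra hble
    push_neg at hble
    -- (w i).val ≤ c - 1, and ≠ c - 1, so ≤ c - 2 ; then value (w i).val is also at position (w i).val + 1 < c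
    have hble2 : (w i).val + 2 ≤ c := by omega
    have hj1 : (⟨(w i).val + 1, by omega⟩ : Fin (n+1)).val = (w i).val + 1 := rfl
    have := hprev ⟨(w i).val + 1, by omega⟩ (by omega) (by omega)
    have heq : w ⟨(w i).val + 1, by omega⟩ = w i := Fin.ext (by omega)
    have := w.injective heq
    have : ((⟨(w i).val + 1, by omega⟩ : Fin (n+1))).val = i.val := congrArg Fin.val this
    omega
  -- any value v with c-1 ≤ v < k, v ≠ (w i).val sits at a position > c
  have hpos : ∀ v : ℕ, ∀ hv : v < n + 1, c - 1 ≤ v → v < k → v ≠ (w i).val →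
      c < (w.symm ⟨v, hv⟩).val := by
    intro v hv hv1 hv2 hv3
    have hwq : w (w.symm ⟨v, hv⟩) = ⟨v, hv⟩ := w.apply_symm_apply _
    have hwqv : (w (w.symm ⟨v, hv⟩)).val = v := by rw [hwq]
    by_contra hqc
    push_neg at hqc
    have hq0 : (w.symm ⟨v, hv⟩).val ≠ 0 := by
      intro h
      have : w.symm ⟨v, hv⟩ = 0 := Fin.ext h
      rw [this] at hwqv; omega
    have hqi : (w.symm ⟨v, hv⟩).val ≠ i.val := by
      intro h
      have : w.symm ⟨v, hv⟩ = i := Fin.ext (by omega)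
      rw [this] at hwqv; omega
    have := hprev (w.symm ⟨v, hv⟩) (by omega) (by omega)
    omega
  rcases Nat.lt_or_ge (w i).val k with hbk' | hbk'
  · -- 321 at (0, i, q) where q holds value c - 1
    have hcb : c - 1 ≠ (w i).val := by omega
    have hq := hpos (c-1) (by omega) le_rfl (by omega) hcb
    have hwq : (w (w.symm ⟨c-1, by omega⟩)).val = c - 1 := by
      rw [w.apply_symm_apply]
    refine hw.1 0 i (w.symm ⟨c-1, by omega⟩) ?_ ?_ ?_ ?_ <;> rw [Fin.lt_def] <;> omega
  · have hb1 : k < (w i).val := by omega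
    have hq1 := hpos (k-2) (by omega) (by omega) (by omega) (by omega)
    have hq2 := hpos (k-1) (by omega) (by omega) (by omega) (by omega)
    have hwq1 : (w (w.symm ⟨k-2, by omega⟩)).val = k - 2 := by rw [w.apply_symm_apply]
    have hwq2 : (w (w.symm ⟨k-1, by omega⟩)).val = k - 1 := by rw [w.apply_symm_apply]
    rcases Nat.lt_or_ge (w.symm ⟨k-2, by omega⟩ : Fin (n+1)).val (w.symm ⟨k-1, by omega⟩ : Fin (n+1)).val with hlt | hge
    · -- 3412 at (0, i, q1, q2)
      refine hw.2 0 i (w.symm ⟨k-2, by omega⟩) (w.symm ⟨k-1, by omega⟩) ?_ ?_ ?_ ?_ ?_ ?_ <;>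
        rw [Fin.lt_def] <;> omega
    · -- 321 at (i, q2, q1)
      have hne : (w.symm ⟨k-2, by omega⟩ : Fin (n+1)).val ≠ (w.symm ⟨k-1, by omega⟩ : Fin (n+1)).val := by
        intro h
        have : (w.symm ⟨k-2, by omega⟩ : Fin (n+1)) = w.symm ⟨k-1, by omega⟩ := Fin.ext h
        rw [this] at hwq1; omega
      refine hw.1 i (w.symm ⟨k-1, by omega⟩) (w.symm ⟨k-2, by omega⟩) ?_ ?_ ?_ ?_ <;>
        rw [Fin.lt_def] <;> omega


def gfin (n k m : ℕ) (hkm : k + m = n + 1) (hk : 1 ≤ k) (hm : 1 ≤ m) (j : Fin m) : Fin (n+1) :=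
  ⟨gval k j.val, by have := j.isLt; unfold gval; split_ifs <;> omega⟩

lemma gfin_val (n k m : ℕ) (hkm : k + m = n + 1) (hk : 1 ≤ k) (hm : 1 ≤ m) (j : Fin m) :
    (gfin n k m hkm hk hm j).val = gval k j.val := rfl

def wfd (n k m : ℕ) (hkm : k + m = n + 1) (hk : 1 ≤ k) (hm : 1 ≤ m) (u : Equiv.Perm (Fin m))
    (i : Fin (n+1)) : Fin (n+1) :=
  if i.val = 0 then ⟨k, by omega⟩
  else if h : i.val < k then ⟨i.val - 1, by have := i.isLt; omega⟩
  else gfin n k m hkm hk hm (u ⟨i.val - k, by have := i.isLt; omega⟩)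

set_option maxHeartbeats 2000000 in
lemma fiber1 (n k m : ℕ) (hk : 1 ≤ k) (hm : 1 ≤ m) (hkm : k + m = n + 1) :
    Nat.card {u : Equiv.Perm (Fin m) // Good u} =
    Nat.card {w : Equiv.Perm (Fin (n+1)) // Good w ∧ (w 0).val = k} := by
  have hkn : k ≤ n + 1 := by omega
  have h00 : (0 : Fin (n+1)).val = 0 := rfl
  -- the forward construction
  have bound1 : ∀ i : Fin (n+1), ¬ i.val < k → i.val - k < m := fun i hi => by
    have := i.isLt; omega
  have bound2 : ∀ j : Fin m, gval k j.val < n + 1 := fun j => by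
    have := j.isLt; unfold gval; split_ifs <;> omega
  set wf : Equiv.Perm (Fin m) → Fin (n+1) → Fin (n+1) := wfd n k m hkm hk hm with hwf
  have wf0 : ∀ u, (wf u 0).val = k := by
    intro u; simp only [hwf]; unfold wfd
    rw [if_pos (show (0 : Fin (n+1)).val = 0 from rfl)]
  have wfB : ∀ u, ∀ i : Fin (n+1), 1 ≤ i.val → i.val < k → (wf u i).val = i.val - 1 := by
    intro u i h1 h2
    simp only [hwf]; unfold wfd
    rw [if_neg (by omega), dif_pos h2]
  have wfC : ∀ u, ∀ i : Fin (n+1), (h : k ≤ i.val) →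
      (wf u i).val = gval k (u ⟨i.val - k, bound1 i (by omega)⟩).val := by
    intro u i h
    simp only [hwf]; unfold wfd
    rw [if_neg (by omega), dif_neg (by omega), gfin_val]
  have hinj : ∀ u, Function.Injective (wf u) := by
    intro u i1 i2 heq
    have hv : (wf u i1).val = (wf u i2).val := congrArg Fin.val heq
    apply Fin.ext
    rcases Nat.eq_zero_or_pos i1.val with h10 | h11 <;> rcases Nat.eq_zero_or_pos i2.val with h20 | h21
    · omega
    · exfalso
      rw [(by exact Fin.ext h10 : i1 = 0), wf0] at hv
      rcases Nat.lt_or_ge i2.val k with h2k | h2k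
      · rw [wfB u i2 h21 h2k] at hv; omega
      · rw [wfC u i2 h2k] at hv; exact gval_ne hk hv.symm
    · exfalso
      rw [(by exact Fin.ext h20 : i2 = 0), wf0] at hv
      rcases Nat.lt_or_ge i1.val k with h1k | h1k
      · rw [wfB u i1 h11 h1k] at hv; omega
      · rw [wfC u i1 h1k] at hv; exact gval_ne hk hv
    · rcases Nat.lt_or_ge i1.val k with h1k | h1k <;> rcases Nat.lt_or_ge i2.val k with h2k | h2k
      · rw [wfB u i1 h11 h1k, wfB u i2 h21 h2k] at hv; omega
      · rw [wfB u i1 h11 h1k, wfC u i2 h2k] at hv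
        have := @gval_ge k (u ⟨i2.val - k, bound1 i2 (by omega)⟩).val; omega
      · rw [wfC u i1 h1k, wfB u i2 h21 h2k] at hv
        have := @gval_ge k (u ⟨i1.val - k, bound1 i1 (by omega)⟩).val; omega
      · rw [wfC u i1 h1k, wfC u i2 h2k] at hv
        have := gval_inj hk hv
        have := u.injective (Fin.ext this)
        have := congrArg Fin.val this
        simp only at this
        omega
  set W : Equiv.Perm (Fin m) → Equiv.Perm (Fin (n+1)) := fun u =>
    Equiv.ofBijective (wf u) (Finite.injective_iff_bijective.mp (hinj u)) with hW
  have Wap : ∀ u i, W u i = wf u i := fun u i => rfl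
  -- tail values are ≥ k - 1 and ≠ k
  have wfC' : ∀ u, ∀ i : Fin (n+1), k ≤ i.val → k - 1 ≤ (wf u i).val ∧ (wf u i).val ≠ k := by
    intro u i h
    rw [wfC u i h]
    exact ⟨gval_ge, gval_ne hk⟩
  -- order transfer on the tail
  have wford : ∀ u, ∀ i i' : Fin (n+1), (h : k ≤ i.val) → (h' : k ≤ i'.val) →
      ((wf u i).val < (wf u i').val ↔
        (u ⟨i.val - k, bound1 i (by omega)⟩).val < (u ⟨i'.val - k, bound1 i' (by omega)⟩).val) := by
    intro u i i' h h'
    rw [wfC u i h, wfC u i' h']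
    exact gval_lt hk
  have hgood : ∀ u : Equiv.Perm (Fin m), Good u → Good (W u) := by
    intro u hu
    constructor
    · intro i j l hij hjl h1 h2
      rw [Fin.lt_def] at hij hjl
      rw [Wap, Wap, Fin.lt_def] at h1 h2
      rcases Nat.lt_or_ge j.val k with hjk | hjk
      · -- j in head: values increase along head and into tail
        have hj1 : 1 ≤ j.val := by omega
        have hvj := wfB u j hj1 hjk
        rcases Nat.lt_or_ge l.val k with hlk | hlk
        · have hvl := wfB u l (by omega) hlk; omega
        · have := (wfC' u l hlk).1; omega
      · have hlk : k ≤ l.val := by omega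
        rcases Nat.eq_zero_or_pos i.val with hi0 | hi1
        · have hvi : (wf u i).val = k := by
            rw [(by exact Fin.ext hi0 : i = 0)]; exact wf0 u
          have hj := wfC' u j hjk
          have hl := (wfC' u l hlk).1
          omega
        · rcases Nat.lt_or_ge i.val k with hik | hik
          · have hvi := wfB u i hi1 hik
            have hj := (wfC' u j hjk).1
            omega
          · -- all in tail: 321 in u
            refine hu.1 ⟨i.val - k, bound1 i (by omega)⟩ ⟨j.val - k, bound1 j (by omega)⟩
              ⟨l.val - k, bound1 l (by omega)⟩ ?_ ?_ ?_ ?_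
            · rw [Fin.lt_def]; simp; omega
            · rw [Fin.lt_def]; simp; omega
            · rw [Fin.lt_def]; exact (wford u l j hlk hjk).mp h1
            · rw [Fin.lt_def]; exact (wford u j i hjk hik).mp h2
    · intro i j l m' hij hjl hlm h1 h2 h3
      rw [Fin.lt_def] at hij hjl hlm
      rw [Wap, Wap, Fin.lt_def] at h1 h2 h3
      rcases Nat.eq_zero_or_pos i.val with hi0 | hi1
      · -- i = 0 : w i = k, so w j > k hence j in tail, then w m ≥ k - 1 ≥ ... contradiction
        have hvi : (wf u i).val = k := by
          rw [(by exact Fin.ext hi0 : i = 0)]; exact wf0 u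
        have hjk : k ≤ j.val := by
          by_contra hjk'
          push_neg at hjk'
          have := wfB u j (by omega) hjk'
          omega
        have hmk : k ≤ m'.val := by omega
        have hlk : k ≤ l.val := by omega
        have hm := wfC' u m' hmk
        have hl := (wfC' u l hlk).1
        omega
      · rcases Nat.lt_or_ge i.val k with hik | hik
        · -- i in head: w i = i - 1 ≤ k - 2 ; w m < w i, but m > i ...
          have hvi := wfB u i hi1 hik
          rcases Nat.lt_or_ge m'.val k with hmk | hmk
          · have hvm := wfB u m' (by omega) hmk; omega
          · have := (wfC' u m' hmk).1; omega
        · -- all in tail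
          have hjk : k ≤ j.val := by omega
          have hlk : k ≤ l.val := by omega
          have hmk : k ≤ m'.val := by omega
          refine hu.2 ⟨i.val - k, bound1 i (by omega)⟩ ⟨j.val - k, bound1 j (by omega)⟩
            ⟨l.val - k, bound1 l (by omega)⟩ ⟨m'.val - k, bound1 m' (by omega)⟩ ?_ ?_ ?_ ?_ ?_ ?_
          · rw [Fin.lt_def]; simp; omega
          · rw [Fin.lt_def]; simp; omega
          · rw [Fin.lt_def]; simp; omega
          · rw [Fin.lt_def]; exact (wford u l m' hlk hmk).mp h1
          · rw [Fin.lt_def]; exact (wford u m' i hmk hik).mp h2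
          · rw [Fin.lt_def]; exact (wford u i j hik hjk).mp h3
  -- the subtype map
  set Φ : {u : Equiv.Perm (Fin m) // Good u} →
      {w : Equiv.Perm (Fin (n+1)) // Good w ∧ (w 0).val = k} :=
    fun u => ⟨W u.val, hgood u.val u.property, wf0 u.val⟩ with hΦ
  apply Nat.card_eq_of_bijective Φ
  constructor
  · -- injective
    rintro ⟨u1, hu1⟩ ⟨u2, hu2⟩ heq
    have heq' : W u1 = W u2 := congrArg Subtype.val heq
    apply Subtype.ext
    apply Equiv.ext
    intro j
    have hkj : k + j.val < n + 1 := by have := j.isLt; omega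
    have h := congrArg (fun w : Equiv.Perm (Fin (n+1)) => w ⟨k + j.val, hkj⟩) heq'
    try simp only at h
    rw [Wap, Wap] at h
    have hv := congrArg Fin.val h
    rw [wfC u1 _ (by simp), wfC u2 _ (by simp)] at hv
    have := gval_inj hk hv
    apply Fin.ext
    simpa using this
  · -- surjective
    rintro ⟨w, hw, hw0⟩
    -- every tail position has value ≥ k-1 and ≠ k
    have hstruct := struct w hw k hw0
    have htail : ∀ i : Fin (n+1), k ≤ i.val → k - 1 ≤ (w i).val ∧ (w i).val ≠ k := by
      intro i hi
      constructor
      · by_contra hle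
        push_neg at hle
        have hvk : (w i).val + 1 < k := by omega
        have hpos : (⟨(w i).val + 1, by omega⟩ : Fin (n+1)).val = (w i).val + 1 := rfl
        have := hstruct ((w i).val + 1) ⟨(w i).val + 1, by omega⟩ rfl (by omega) (by omega)
        have heq : w ⟨(w i).val + 1, by omega⟩ = w i := Fin.ext (by omega)
        have := congrArg Fin.val (w.injective heq)
        simp only at this
        omega
      · intro hvk
        have : w i = w 0 := Fin.ext (by omega)
        have := congrArg Fin.val (w.injective this)
        try simp only at this
        omega
    -- define the tail pattern
    have hm1 : 0 < m := by omega
    set uf : Fin m → Fin m := fun j =>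
      if (w ⟨k + j.val, by omega⟩).val = k - 1 then ⟨0, hm1⟩
      else ⟨(w ⟨k + j.val, by omega⟩).val - k, by
        have := (w ⟨k + j.val, by omega⟩).isLt; omega⟩ with huf
    have hbridge : ∀ j : Fin m, gval k (uf j).val = (w ⟨k + j.val, by omega⟩).val := by
      intro j
      have ht := htail ⟨k + j.val, by omega⟩ (by simp)
      simp only [huf]
      split_ifs with h
      · simp [gval]; omega
      · simp only [gval]
        rw [if_neg (by omega)]
        omega
    have hufinj : Function.Injective uf := by
      intro j1 j2 h
      have := congrArg (gval k ∘ Fin.val) h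
      simp only [Function.comp] at this
      rw [hbridge j1, hbridge j2] at this
      have := w.injective (Fin.ext this)
      have := congrArg Fin.val this
      simp only at this
      apply Fin.ext; omega
    set u : Equiv.Perm (Fin m) :=
      Equiv.ofBijective uf (Finite.injective_iff_bijective.mp hufinj) with hu
    have hupa : ∀ j, u j = uf j := fun j => rfl
    -- order transfer: u j < u j' ↔ w (k+j) < w (k+j')
    have huord : ∀ j j' : Fin m,
        (u j < u j' ↔ (w ⟨k + j.val, by omega⟩ : Fin (n+1)) < w ⟨k + j'.val, by omega⟩) := by
      intro j j'
      rw [Fin.lt_def, Fin.lt_def, hupa, hupa, ← gval_lt (j := (uf j).val) (j' := (uf j').val) hk,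
        hbridge j, hbridge j']
    have hugood : Good u := by
      constructor
      · intro a b c hab hbc h1 h2
        rw [Fin.lt_def] at hab hbc
        refine hw.1 ⟨k + a.val, by omega⟩ ⟨k + b.val, by omega⟩ ⟨k + c.val, by omega⟩
          (by rw [Fin.lt_def]; simp; omega) (by rw [Fin.lt_def]; simp; omega)
          ((huord c b).mp h1) ((huord b a).mp h2)
      · intro a b c d hab hbc hcd h1 h2 h3
        rw [Fin.lt_def] at hab hbc hcd
        refine hw.2 ⟨k + a.val, by omega⟩ ⟨k + b.val, by omega⟩ ⟨k + c.val, by omega⟩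
          ⟨k + d.val, by omega⟩
          (by rw [Fin.lt_def]; simp; omega) (by rw [Fin.lt_def]; simp; omega)
          (by rw [Fin.lt_def]; simp; omega)
          ((huord c d).mp h1) ((huord d a).mp h2) ((huord a b).mp h3)
    refine ⟨⟨u, hugood⟩, ?_⟩
    apply Subtype.ext
    simp only [hΦ]
    apply Equiv.ext
    intro i
    rw [Wap]
    apply Fin.ext
    rcases Nat.eq_zero_or_pos i.val with hi0 | hi1
    · rw [(by exact Fin.ext hi0 : i = 0), wf0]; omega
    · rcases Nat.lt_or_ge i.val k with hik | hik
      · rw [wfB u i hi1 hik, hstruct i.val i rfl hi1 hik]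
      · rw [wfC u i hik, hupa, hbridge]
        congr 1
        apply congrArg
        apply Fin.ext
        simp
        omega


def sfin (n : ℕ) (j : Fin n) : Fin (n+1) := ⟨1 + j.val, by have := j.isLt; omega⟩

def wfd0 (n : ℕ) (u : Equiv.Perm (Fin n)) (i : Fin (n+1)) : Fin (n+1) :=
  if h : i.val = 0 then ⟨0, by omega⟩
  else sfin n (u ⟨i.val - 1, by have := i.isLt; omega⟩)

lemma fiber0 (n : ℕ) :
    Nat.card {u : Equiv.Perm (Fin n) // Good u} =
    Nat.card {w : Equiv.Perm (Fin (n+1)) // Good w ∧ (w 0).val = 0} := by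
  have h00 : (0 : Fin (n+1)).val = 0 := rfl
  set wf := wfd0 n with hwf
  have wf0 : ∀ u, (wf u 0).val = 0 := by
    intro u; simp only [hwf]; unfold wfd0
    rw [dif_pos (show (0 : Fin (n+1)).val = 0 from rfl)]
  have wfC : ∀ u, ∀ i : Fin (n+1), (h : 1 ≤ i.val) →
      (wf u i).val = 1 + (u ⟨i.val - 1, by have := i.isLt; omega⟩).val := by
    intro u i h
    simp only [hwf]; unfold wfd0
    rw [dif_neg (by omega)]
    rfl
  have hinj : ∀ u, Function.Injective (wf u) := by
    intro u i1 i2 heq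
    have hv : (wf u i1).val = (wf u i2).val := congrArg Fin.val heq
    apply Fin.ext
    rcases Nat.eq_zero_or_pos i1.val with h10 | h11 <;> rcases Nat.eq_zero_or_pos i2.val with h20 | h21
    · omega
    · exfalso; rw [(by exact Fin.ext h10 : i1 = 0), wf0, wfC u i2 h21] at hv; omega
    · exfalso; rw [(by exact Fin.ext h20 : i2 = 0), wf0, wfC u i1 h11] at hv; omega
    · rw [wfC u i1 h11, wfC u i2 h21] at hv
      have := u.injective (Fin.ext (by omega :
        (u ⟨i1.val - 1, by have := i1.isLt; omega⟩).val = (u ⟨i2.val - 1, by have := i2.isLt; omega⟩).val))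
      have := congrArg Fin.val this
      simp only at this
      omega
  set W : Equiv.Perm (Fin n) → Equiv.Perm (Fin (n+1)) := fun u =>
    Equiv.ofBijective (wf u) (Finite.injective_iff_bijective.mp (hinj u)) with hW
  have Wap : ∀ u i, W u i = wf u i := fun u i => rfl
  have wford : ∀ u, ∀ i i' : Fin (n+1), (h : 1 ≤ i.val) → (h' : 1 ≤ i'.val) →
      ((wf u i).val < (wf u i').val ↔
        (u ⟨i.val - 1, by have := i.isLt; omega⟩).val < (u ⟨i'.val - 1, by have := i'.isLt; omega⟩).val) := by
    intro u i i' h h'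
    rw [wfC u i h, wfC u i' h']
    omega
  have hgood : ∀ u : Equiv.Perm (Fin n), Good u → Good (W u) := by
    intro u hu
    constructor
    · intro i j l hij hjl h1 h2
      rw [Fin.lt_def] at hij hjl
      rw [Wap, Wap, Fin.lt_def] at h1 h2
      rcases Nat.eq_zero_or_pos i.val with hi0 | hi1
      · have : (wf u i).val = 0 := by rw [(by exact Fin.ext hi0 : i = 0), wf0]
        omega
      · refine hu.1 ⟨i.val - 1, by have := i.isLt; omega⟩ ⟨j.val - 1, by have := j.isLt; omega⟩
          ⟨l.val - 1, by have := l.isLt; omega⟩ ?_ ?_ ?_ ?_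
        · rw [Fin.lt_def]; simp; omega
        · rw [Fin.lt_def]; simp; omega
        · rw [Fin.lt_def]; exact (wford u l j (by omega) (by omega)).mp h1
        · rw [Fin.lt_def]; exact (wford u j i (by omega) hi1).mp h2
    · intro i j l m' hij hjl hlm h1 h2 h3
      rw [Fin.lt_def] at hij hjl hlm
      rw [Wap, Wap, Fin.lt_def] at h1 h2 h3
      rcases Nat.eq_zero_or_pos i.val with hi0 | hi1
      · have : (wf u i).val = 0 := by rw [(by exact Fin.ext hi0 : i = 0), wf0]
        omega
      · refine hu.2 ⟨i.val - 1, by have := i.isLt; omega⟩ ⟨j.val - 1, by have := j.isLt; omega⟩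
          ⟨l.val - 1, by have := l.isLt; omega⟩ ⟨m'.val - 1, by have := m'.isLt; omega⟩ ?_ ?_ ?_ ?_ ?_ ?_
        · rw [Fin.lt_def]; simp; omega
        · rw [Fin.lt_def]; simp; omega
        · rw [Fin.lt_def]; simp; omega
        · rw [Fin.lt_def]; exact (wford u l m' (by omega) (by omega)).mp h1
        · rw [Fin.lt_def]; exact (wford u m' i (by omega) hi1).mp h2
        · rw [Fin.lt_def]; exact (wford u i j hi1 (by omega)).mp h3
  set Φ : {u : Equiv.Perm (Fin n) // Good u} →
      {w : Equiv.Perm (Fin (n+1)) // Good w ∧ (w 0).val = 0} :=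
    fun u => ⟨W u.val, hgood u.val u.property, wf0 u.val⟩ with hΦ
  apply Nat.card_eq_of_bijective Φ
  constructor
  · rintro ⟨u1, hu1⟩ ⟨u2, hu2⟩ heq
    have heq' : W u1 = W u2 := congrArg Subtype.val heq
    apply Subtype.ext
    apply Equiv.ext
    intro j
    have hkj : 1 + j.val < n + 1 := by have := j.isLt; omega
    have h := congrArg (fun w : Equiv.Perm (Fin (n+1)) => w ⟨1 + j.val, hkj⟩) heq'
    try simp only at h
    rw [Wap, Wap] at h
    have hv := congrArg Fin.val h
    rw [wfC u1 _ (by simp), wfC u2 _ (by simp)] at hv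
    apply Fin.ext
    show (u1 j).val = (u2 j).val
    have e1 : (⟨(⟨1 + j.val, hkj⟩ : Fin (n+1)).val - 1, by simp⟩ : Fin n) = j := Fin.ext (by simp)
    rw [e1] at hv
    omega
  · rintro ⟨w, hw, hw0⟩
    have htail : ∀ i : Fin (n+1), 1 ≤ i.val → 1 ≤ (w i).val := by
      intro i hi
      by_contra hle
      push_neg at hle
      have : w i = w 0 := Fin.ext (by omega)
      have := congrArg Fin.val (w.injective this)
      simp only [h00] at this
      omega
    set uf : Fin n → Fin n := fun j =>
      ⟨(w ⟨1 + j.val, by have := j.isLt; omega⟩).val - 1, by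
        have := (w ⟨1 + j.val, by have := j.isLt; omega⟩).isLt
        have := htail ⟨1 + j.val, by have := j.isLt; omega⟩ (by simp)
        omega⟩ with huf
    have hbridge : ∀ j : Fin n, 1 + (uf j).val = (w ⟨1 + j.val, by have := j.isLt; omega⟩).val := by
      intro j
      have := htail ⟨1 + j.val, by have := j.isLt; omega⟩ (by simp)
      simp only [huf]
      omega
    have hufinj : Function.Injective uf := by
      intro j1 j2 h
      have hv := congrArg Fin.val h
      have h1 := hbridge j1
      have h2 := hbridge j2
      have : (w ⟨1 + j1.val, by have := j1.isLt; omega⟩).val = (w ⟨1 + j2.val, by have := j2.isLt; omega⟩).val := by omega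
      have := w.injective (Fin.ext this)
      have := congrArg Fin.val this
      simp only at this
      apply Fin.ext; omega
    set u : Equiv.Perm (Fin n) :=
      Equiv.ofBijective uf (Finite.injective_iff_bijective.mp hufinj) with hu
    have hupa : ∀ j, u j = uf j := fun j => rfl
    have huord : ∀ j j' : Fin n,
        (u j < u j' ↔ (w ⟨1 + j.val, by have := j.isLt; omega⟩ : Fin (n+1)) <
          w ⟨1 + j'.val, by have := j'.isLt; omega⟩) := by
      intro j j'
      rw [Fin.lt_def, Fin.lt_def, hupa, hupa]
      have := hbridge j
      have := hbridge j'
      omega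
    have hugood : Good u := by
      constructor
      · intro a b c hab hbc h1 h2
        rw [Fin.lt_def] at hab hbc
        refine hw.1 ⟨1 + a.val, by have := a.isLt; omega⟩ ⟨1 + b.val, by have := b.isLt; omega⟩
          ⟨1 + c.val, by have := c.isLt; omega⟩
          (by rw [Fin.lt_def]; simp; omega) (by rw [Fin.lt_def]; simp; omega)
          ((huord c b).mp h1) ((huord b a).mp h2)
      · intro a b c d hab hbc hcd h1 h2 h3
        rw [Fin.lt_def] at hab hbc hcd
        refine hw.2 ⟨1 + a.val, by have := a.isLt; omega⟩ ⟨1 + b.val, by have := b.isLt; omega⟩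
          ⟨1 + c.val, by have := c.isLt; omega⟩ ⟨1 + d.val, by have := d.isLt; omega⟩
          (by rw [Fin.lt_def]; simp; omega) (by rw [Fin.lt_def]; simp; omega)
          (by rw [Fin.lt_def]; simp; omega)
          ((huord c d).mp h1) ((huord d a).mp h2) ((huord a b).mp h3)
    refine ⟨⟨u, hugood⟩, ?_⟩
    apply Subtype.ext
    simp only [hΦ]
    apply Equiv.ext
    intro i
    rw [Wap]
    apply Fin.ext
    rcases Nat.eq_zero_or_pos i.val with hi0 | hi1
    · rw [(by exact Fin.ext hi0 : i = 0), wf0]; omega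
    · rw [wfC u i hi1, hupa]
      have hb := hbridge ⟨i.val - 1, by have := i.isLt; omega⟩
      have e1 : (⟨1 + (⟨i.val - 1, by have := i.isLt; omega⟩ : Fin n).val, by
          have := i.isLt; simp; omega⟩ : Fin (n+1)) = i := Fin.ext (by simp; omega)
      rw [e1] at hb
      omega


noncomputable def acnt (m : ℕ) : ℕ := Nat.card {u : Equiv.Perm (Fin m) // Good u}

lemma card_partition (n : ℕ) :
    acnt (n+1) = ∑ k : Fin (n+1), Nat.card
      {w : Equiv.Perm (Fin (n+1)) // Good w ∧ (w 0).val = k.val} := by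
  classical
  rw [acnt]
  rw [Nat.card_congr (α := {w : Equiv.Perm (Fin (n+1)) // Good w})
    (β := Σ k : Fin (n+1), {w : Equiv.Perm (Fin (n+1)) // Good w ∧ (w 0).val = k.val})
    ((Equiv.sigmaFiberEquiv
      (fun x : {w : Equiv.Perm (Fin (n+1)) // Good w} => (x.val 0))).symm.trans
      (Equiv.sigmaCongrRight fun k => {
        toFun := fun x => ⟨x.val.val, x.val.property, by rw [x.property]⟩
        invFun := fun x => ⟨⟨x.val, x.property.1⟩, Fin.ext x.property.2⟩
        left_inv := fun x => by apply Subtype.ext; apply Subtype.ext; rfl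
        right_inv := fun x => by apply Subtype.ext; rfl }))]
  rw [Nat.card_eq_fintype_card, Fintype.card_sigma]
  exact Finset.sum_congr rfl fun k _ => (Nat.card_eq_fintype_card).symm

lemma acnt_rec (n : ℕ) :
    acnt (n+1) = acnt n + ∑ m ∈ Finset.range n, acnt (m+1) := by
  rw [card_partition n, Fin.sum_univ_succ]
  congr 1
  · simp only [Fin.val_zero]
    rw [← fiber0 n]
    rfl
  · have hterm : ∀ k : Fin n, Nat.card
        {w : Equiv.Perm (Fin (n+1)) // Good w ∧ (w 0).val = (Fin.succ k).val} =
        acnt (n - k.val) := by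
      intro k
      have hkk : (Fin.succ k).val = k.val + 1 := rfl
      rw [hkk, acnt, fiber1 n (k.val + 1) (n - k.val) (by omega)
        (by have := k.isLt; omega) (by have := k.isLt; omega)]
    rw [Finset.sum_congr rfl (fun k _ => hterm k)]
    rw [Fin.sum_univ_eq_sum_range (fun j => acnt (n - j)) n]
    rw [← Finset.sum_range_reflect (fun j => acnt (j+1)) n]
    exact Finset.sum_congr rfl fun j hj => by
      have := Finset.mem_range.mp hj
      congr 1
      omega

lemma acnt_one : acnt 1 = 1 := by
  have hall : ∀ u : Equiv.Perm (Fin 1), Good u := by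
    intro u
    constructor
    · intro i j l hij hjl h1 h2
      rw [Fin.lt_def] at hij; have := i.isLt; have := j.isLt; omega
    · intro i j l m hij hjl hlm h1 h2 h3
      rw [Fin.lt_def] at hij; have := i.isLt; have := j.isLt; omega
  rw [acnt, Nat.card_congr (Equiv.subtypeUnivEquiv hall)]
  simp [Nat.card_eq_fintype_card]

lemma acnt_fib : ∀ n : ℕ, acnt (n+1) = Nat.fib (2*n+1) ∧
    (∑ m ∈ Finset.range (n+1), acnt (m+1)) = Nat.fib (2*n+2) := by
  intro n
  induction n with
  | zero => simp [acnt_one]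
  | succ n ih =>
    have h0 := Nat.fib_add_two (n := 2*n+1)
    have h0' := Nat.fib_add_two (n := 2*n+2)
    have e4 : 2*n+1+2 = 2*n+3 := by ring
    have e5 : 2*n+2+2 = 2*n+4 := by ring
    have e6 : 2*n+2+1 = 2*n+3 := by ring
    have e7 : 2*n+1+1 = 2*n+2 := by ring
    rw [e4, e7] at h0
    rw [e5, e6] at h0'
    have h1 : acnt (n+2) = Nat.fib (2*(n+1)+1) := by
      have e : 2*(n+1)+1 = 2*n+3 := by ring
      rw [acnt_rec (n+1), ih.1, ih.2, e]
      omega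
    refine ⟨h1, ?_⟩
    have e2 : 2*(n+1)+2 = 2*n+4 := by ring
    have e : 2*(n+1)+1 = 2*n+3 := by ring
    rw [Finset.sum_range_succ, ih.2, h1, e2, e]
    omega

lemma avoid_iff {n : ℕ} (w : Equiv.Perm (Fin n)) :
    (AvoidsPattern w p321 ∧ AvoidsPattern w p3412) ↔ Good w := by
  rw [AvoidsPattern, AvoidsPattern, contains321_iff, contains3412_iff]
  constructor
  · rintro ⟨h1, h2⟩
    exact ⟨fun i j l hij hjl ha hb => h1 ⟨i, j, l, hij, hjl, ha, hb⟩,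
      fun i j l m hij hjl hlm ha hb hc => h2 ⟨i, j, l, m, hij, hjl, hlm, ha, hb, hc⟩⟩
  · rintro ⟨g1, g2⟩
    constructor
    · rintro ⟨i, j, l, hij, hjl, ha, hb⟩; exact g1 i j l hij hjl ha hb
    · rintro ⟨i, j, l, m, hij, hjl, hlm, ha, hb, hc⟩; exact g2 i j l m hij hjl hlm ha hb hc

/-- The number of permutations of `{1,…,n+1}` avoiding 321 and 3412 is the odd-indexed
Fibonacci number `F (2n+1)` (with `F 1 = F 2 = 1`): 1, 2, 5, 13, 34, 89, … . -/
theorem stmt_3 (n : ℕ) :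
    Nat.card {w : Equiv.Perm (Fin (n + 1)) //
      AvoidsPattern w p321 ∧ AvoidsPattern w p3412} = Nat.fib (2 * n + 1) := by
  rw [Nat.card_congr (Equiv.subtypeEquivRight (fun w => avoid_iff w))]
  exact (acnt_fib n).1
end

section
/- The number of permutations of {1,...,n+1} avoiding the pattern 321 equals the Catalan number C_{n+1}. -/
open Finset Equiv

/-- no-321 condition, concrete form -/
def Av321 {N : ℕ} (w : Perm (Fin N)) : Prop :=
  ∀ ⦃i j k : Fin N⦄, i < j → j < k → w j < w i → w k < w j → False

theorem avoids_iff {N : ℕ} (w : Perm (Fin N)) : AvoidsPattern w p321 ↔ Av321 w := by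
  constructor
  · intro h i j k hij hjk h1 h2
    apply h
    have hstrict : StrictMono ![i, j, k] := by
      intro a b hab
      fin_cases a <;> fin_cases b <;>
        first
          | exact absurd hab (by decide)
          | assumption
          | exact hij.trans hjk
    have h3 : w k < w i := h2.trans h1
    refine ⟨OrderEmbedding.ofStrictMono ![i,j,k] hstrict, ?_⟩
    intro a b
    fin_cases a <;> fin_cases b
    · exact iff_of_false (by decide) (lt_irrefl _)
    · exact iff_of_false (by decide) (lt_asymm h1)
    · exact iff_of_false (by decide) (lt_asymm h3)
    · exact iff_of_true (by decide) h1
    · exact iff_of_false (by decide) (lt_irrefl _)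
    · exact iff_of_false (by decide) (lt_asymm h2)
    · exact iff_of_true (by decide) h3
    · exact iff_of_true (by decide) h2
    · exact iff_of_false (by decide) (lt_irrefl _)
  · rintro h ⟨f, hf⟩
    have h10 : w (f 1) < w (f 0) := (hf 1 0).mp (by decide)
    have h21 : w (f 2) < w (f 1) := (hf 2 1).mp (by decide)
    exact h (f.strictMono (by decide)) (f.strictMono (by decide)) h10 h21

/-- running maximum, as a natural number -/
def rmax {N : ℕ} (w : Perm (Fin N)) (i : Fin N) : ℕ :=
  (Finset.Iic i).sup (fun j => (w j : ℕ))

lemma le_rmax {N : ℕ} (w : Perm (Fin N)) {i j : Fin N} (h : j ≤ i) :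
    (w j : ℕ) ≤ rmax w i := Finset.le_sup (f := fun j => ((w j : Fin N) : ℕ)) (mem_Iic.2 h)

lemma rmax_mono {N : ℕ} (w : Perm (Fin N)) : Monotone (rmax w) :=
  fun _ _ h => Finset.sup_mono (Finset.Iic_subset_Iic.2 h)

lemma rmax_lt {N : ℕ} (w : Perm (Fin N)) (i : Fin N) : rmax w i < N :=
  (Finset.sup_lt_iff (Nat.zero_lt_of_lt i.isLt)).2 (fun j _ => (w j).isLt)

lemma exists_rmax {N : ℕ} (w : Perm (Fin N)) (i : Fin N) :
    ∃ j ≤ i, (w j : ℕ) = rmax w i := by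
  obtain ⟨j, hj, hje⟩ := Finset.exists_mem_eq_sup (Finset.Iic i) ⟨i, mem_Iic.2 le_rfl⟩
    (fun j => (w j : ℕ))
  exact ⟨j, mem_Iic.1 hj, hje.symm⟩

lemma self_le_rmax {N : ℕ} (w : Perm (Fin N)) (i : Fin N) : (i : ℕ) ≤ rmax w i := by
  have hinj : Set.InjOn (fun j => (w j : ℕ)) (Finset.Iic i) := by
    intro a _ b _ hab
    exact w.injective (Fin.ext hab)
  have hcard : ((Finset.Iic i).image (fun j => (w j : ℕ))).card = (i : ℕ) + 1 := by
    rw [Finset.card_image_of_injOn hinj]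
    simp [Fin.card_Iic]
  have hsub : (Finset.Iic i).image (fun j => (w j : ℕ)) ⊆ Finset.Iic (rmax w i) := by
    intro t ht
    obtain ⟨j, hj, rfl⟩ := Finset.mem_image.1 ht
    exact mem_Iic.2 (le_rmax w (mem_Iic.1 hj))
  have := Finset.card_le_card hsub
  rw [hcard, Nat.card_Iic] at this
  omega


/-- shift values: inverse of deleting value v -/
def unre (v t : ℕ) : ℕ := if t < v then t else t + 1
/-- delete value v (renormalize values above v down) -/
def ren (v t : ℕ) : ℕ := if v < t then t - 1 else t

lemma unre_mono (v : ℕ) : Monotone (unre v) := by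
  intro a b h; unfold unre; split_ifs <;> omega

lemma unre_lt_iff (v : ℕ) {a b : ℕ} : unre v a < unre v b ↔ a < b := by
  unfold unre; split_ifs <;> omega

lemma ren_unre (v t : ℕ) : ren v (unre v t) = t := by
  unfold ren unre; split_ifs <;> omega

lemma unre_ren (v t : ℕ) (h : t ≠ v) : unre v (ren v t) = t := by
  unfold ren unre; split_ifs <;> omega

lemma ren_mono (v : ℕ) : Monotone (ren v) := by
  intro a b h; unfold ren; split_ifs <;> omega

lemma ren_lt_ren (v : ℕ) {a b : ℕ} (hab : a < b) (ha : a ≠ v) : ren v a < ren v b := by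
  unfold ren; split_ifs <;> omega

lemma coe_succAbove {N : ℕ} (v : Fin (N+1)) (t : Fin N) :
    ((v.succAbove t : Fin (N+1)) : ℕ) = unre (v : ℕ) (t : ℕ) := by
  rcases lt_or_ge ((t : ℕ)) (v : ℕ) with h | h
  · rw [Fin.succAbove_of_castSucc_lt v t (by simpa [Fin.lt_def] using h)]
    simp [unre, h]
  · rw [Fin.succAbove_of_le_castSucc v t (by simpa [Fin.le_def] using h)]
    simp [unre, not_lt.2 h]

/-- append the value `v` at the end of a permutation of `Fin N`. -/
noncomputable def appendPerm {N : ℕ} (v : Fin (N+1)) (w : Perm (Fin N)) : Perm (Fin (N+1)) :=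
  Equiv.ofBijective (fun i => Fin.lastCases v (fun j => v.succAbove (w j)) i)
    (Finite.injective_iff_bijective.mp (by
      intro a b hab
      induction a using Fin.lastCases with
      | last =>
        induction b using Fin.lastCases with
        | last => rfl
        | cast j =>
          simp only [Fin.lastCases_last, Fin.lastCases_castSucc] at hab
          exact absurd hab.symm (Fin.succAbove_ne v (w j))
      | cast j =>
        induction b using Fin.lastCases with
        | last =>
          simp only [Fin.lastCases_last, Fin.lastCases_castSucc] at hab
          exact absurd hab (Fin.succAbove_ne v (w j))
        | cast j' =>
          simp only [Fin.lastCases_castSucc] at hab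
          have := v.succAbove_right_injective hab
          rw [w.injective this]))

@[simp] lemma appendPerm_last {N : ℕ} (v : Fin (N+1)) (w : Perm (Fin N)) :
    appendPerm v w (Fin.last N) = v := by
  simp [appendPerm, Equiv.ofBijective]

@[simp] lemma appendPerm_castSucc {N : ℕ} (v : Fin (N+1)) (w : Perm (Fin N)) (j : Fin N) :
    appendPerm v w (Fin.castSucc j) = v.succAbove (w j) := by
  simp [appendPerm, Equiv.ofBijective]

/-- every permutation with w(last) = v is an appendPerm -/
lemma exists_appendPerm {N : ℕ} (u : Perm (Fin (N+1))) (v : Fin (N+1))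
    (h : u (Fin.last N) = v) : ∃ u' : Perm (Fin N), u = appendPerm v u' ∧
      ∀ j : Fin N, (u' j : ℕ) = ren (v : ℕ) ((u (Fin.castSucc j) : ℕ)) := by
  have hne : ∀ j : Fin N, u (Fin.castSucc j) ≠ v := by
    intro j hj
    exact absurd (u.injective (hj.trans h.symm)) (Fin.ne_last_of_lt (Fin.castSucc_lt_last j))
  have hlt : ∀ j : Fin N, ren (v : ℕ) ((u (Fin.castSucc j) : ℕ)) < N := by
    intro j
    have h1 : (u (Fin.castSucc j) : ℕ) < N + 1 := (u _).isLt
    have h2 : (u (Fin.castSucc j) : ℕ) ≠ (v : ℕ) := fun hh => hne j (Fin.ext hh)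
    have h3 : (v:ℕ) < N + 1 := v.isLt
    unfold ren; split_ifs <;> omega
  set f : Fin N → Fin N := fun j => ⟨ren (v : ℕ) ((u (Fin.castSucc j) : ℕ)), hlt j⟩ with hf
  have hinj : Function.Injective f := by
    intro a b hab
    have : ren (v:ℕ) (u (Fin.castSucc a) : ℕ) = ren (v:ℕ) (u (Fin.castSucc b) : ℕ) :=
      congrArg Fin.val hab
    have h2 : ((u (Fin.castSucc a) : Fin (N+1)) : ℕ) = ((u (Fin.castSucc b)) : ℕ) := by
      have ha := fun hh => hne a (Fin.ext hh)
      have hb := fun hh => hne b (Fin.ext hh)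
      calc ((u (Fin.castSucc a) : Fin (N+1)) : ℕ)
          = unre (v:ℕ) (ren (v:ℕ) (u (Fin.castSucc a) : ℕ)) := (unre_ren _ _ ha).symm
        _ = unre (v:ℕ) (ren (v:ℕ) (u (Fin.castSucc b) : ℕ)) := by rw [this]
        _ = _ := unre_ren _ _ hb
    exact Fin.castSucc_injective _ (u.injective (Fin.ext h2))
  refine ⟨Equiv.ofBijective f (Finite.injective_iff_bijective.mp hinj), ?_, ?_⟩
  · apply Equiv.ext
    intro i
    induction i using Fin.lastCases with
    | last => simpa using h
    | cast j =>
      rw [appendPerm_castSucc]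
      apply Fin.ext
      rw [coe_succAbove]
      show _ = unre (v:ℕ) ((f j : ℕ))
      rw [hf]
      exact (unre_ren _ _ (fun hh => hne j (Fin.ext hh))).symm
  · intro j; rfl


/-- staircase functions: monotone, above the diagonal -/
def Stair (N : ℕ) : Type :=
  {f : Fin N → ℕ // Monotone f ∧ ∀ i : Fin N, (i : ℕ) ≤ f i ∧ f i < N}

instance stairFinite (N : ℕ) : Finite (Stair N) := by
  apply Finite.of_injective (fun F : Stair N => (fun i => (⟨F.1 i, (F.2.2 i).2⟩ : Fin N)))
  intro a b hab
  exact Subtype.ext (funext fun i => congrArg Fin.val (congrFun hab i))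

instance : Unique (Stair 0) where
  default := ⟨Fin.elim0, fun i => i.elim0, fun i => i.elim0⟩
  uniq := fun F => Subtype.ext (funext fun i => i.elim0)

lemma stair_mono {M : ℕ} (F : Stair M) {a b : ℕ} (ha : a < M) (hb : b < M) (h : a ≤ b) :
    F.1 ⟨a, ha⟩ ≤ F.1 ⟨b, hb⟩ := F.2.1 (Fin.mk_le_mk.2 h)

lemma stair_lb {M : ℕ} (F : Stair M) {a : ℕ} (ha : a < M) : a ≤ F.1 ⟨a, ha⟩ :=
  (F.2.2 ⟨a, ha⟩).1

lemma stair_ub {M : ℕ} (F : Stair M) {a : ℕ} (ha : a < M) : F.1 ⟨a, ha⟩ < M :=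
  (F.2.2 ⟨a, ha⟩).2

section FT
variable {N : ℕ}

lemma ft_ex (F : Stair (N+1)) : ∃ k : ℕ, ∃ h : k < N + 1, F.1 ⟨k, h⟩ = k := by
  refine ⟨N, Nat.lt_succ_self N, ?_⟩
  have h1 := (F.2.2 ⟨N, Nat.lt_succ_self N⟩).1
  have h2 := (F.2.2 ⟨N, Nat.lt_succ_self N⟩).2
  simp only at h1 h2
  omega

open Classical in
/-- first touch of the diagonal -/
noncomputable def ft (F : Stair (N+1)) : ℕ := Nat.find (ft_ex F)

lemma ft_lt (F : Stair (N+1)) : ft F < N + 1 := (Nat.find_spec (ft_ex F)).1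

lemma ft_spec (F : Stair (N+1)) : F.1 ⟨ft F, ft_lt F⟩ = ft F := by
  have := (Nat.find_spec (ft_ex F)).2
  exact this

lemma ft_min (F : Stair (N+1)) {i : ℕ} (hi : i < ft F) (h : i < N + 1) : F.1 ⟨i, h⟩ ≠ i := by
  have := Nat.find_min (ft_ex F) hi
  push_neg at this
  exact this h

/-- part of the staircase strictly before the first touch -/
noncomputable def part1 (F : Stair (N+1)) : Stair (ft F) := by
  refine ⟨fun i => F.1 ⟨(i : ℕ), by have := i.isLt; have := ft_lt F; omega⟩ - 1, ?_, ?_⟩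
  · intro a b hab
    have hf := ft_lt F
    have ha' : (a:ℕ) < N + 1 := by have := a.isLt; omega
    have hb' : (b:ℕ) < N + 1 := by have := b.isLt; omega
    have := stair_mono F ha' hb' hab
    beta_reduce
    omega
  · intro i
    have hlt := i.isLt
    have hf := ft_lt F
    have hi' : (i:ℕ) < N + 1 := by omega
    have h1 := stair_lb F hi'
    have h2 := ft_min F hlt hi'
    have h3 : F.1 ⟨(i:ℕ), hi'⟩ ≤ F.1 ⟨ft F, ft_lt F⟩ := stair_mono F hi' (ft_lt F) (le_of_lt hlt)
    rw [ft_spec F] at h3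
    beta_reduce
    omega

/-- part of the staircase strictly after the first touch -/
noncomputable def part2 (F : Stair (N+1)) : Stair (N - ft F) := by
  refine ⟨fun j => F.1 ⟨ft F + 1 + (j : ℕ), by have := j.isLt; omega⟩ - (ft F + 1), ?_, ?_⟩
  · intro a b hab
    have ha' : ft F + 1 + (a:ℕ) < N + 1 := by have := a.isLt; omega
    have hb' : ft F + 1 + (b:ℕ) < N + 1 := by have := b.isLt; omega
    have := stair_mono F ha' hb' (by have : (a:ℕ) ≤ (b:ℕ) := hab; omega)
    beta_reduce
    omega
  · intro j
    have hlt := j.isLt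
    have hj' : ft F + 1 + (j:ℕ) < N + 1 := by omega
    have h1 := stair_lb F hj'
    have h2 := stair_ub F hj'
    beta_reduce
    omega

/-- glue two staircases into one with a diagonal touch at `k` -/
def stairGlue (k : Fin (N+1)) (G : Stair k) (H : Stair (N - k)) : Stair (N+1) := by
  refine ⟨fun i => if hik : (i : ℕ) < (k:ℕ) then G.1 ⟨(i:ℕ), hik⟩ + 1
      else if hik2 : (i : ℕ) = (k:ℕ) then (k:ℕ)
      else H.1 ⟨(i : ℕ) - ((k:ℕ) + 1), by have := i.isLt; have := k.isLt; omega⟩ + ((k:ℕ) + 1),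
    ?_, ?_⟩
  · -- monotone
    intro a b hab
    have hab' : (a : ℕ) ≤ b := hab
    have hka := k.isLt
    have hia := a.isLt
    have hib := b.isLt
    beta_reduce
    by_cases h1 : (a:ℕ) < k
    · by_cases h2 : (b:ℕ) < k
      · simp only [dif_pos h1, dif_pos h2]
        have := stair_mono G h1 h2 hab'
        omega
      · have hG := stair_ub G h1
        simp only [dif_pos h1, dif_neg h2]
        by_cases h3 : (b:ℕ) = k
        · simp only [dif_pos h3]; omega
        · simp only [dif_neg h3]
          have hbb : (b : ℕ) - ((k:ℕ) + 1) < N - (k:ℕ) := by omega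
          have := stair_lb H hbb
          omega
    · have h1' : (k:ℕ) ≤ a := not_lt.mp h1
      have h2 : ¬ (b:ℕ) < k := by omega
      by_cases h3 : (a:ℕ) = k
      · simp only [dif_neg h1, dif_pos h3, dif_neg h2]
        by_cases h4 : (b:ℕ) = k
        · simp only [dif_pos h4]; omega
        · simp only [dif_neg h4]; omega
      · have h4 : ¬ (b:ℕ) = k := by omega
        simp only [dif_neg h1, dif_neg h2, dif_neg h3, dif_neg h4]
        have haa : (a : ℕ) - ((k:ℕ) + 1) < N - (k:ℕ) := by omega
        have hbb : (b : ℕ) - ((k:ℕ) + 1) < N - (k:ℕ) := by omega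
        have := stair_mono H haa hbb (by omega)
        omega
  · -- bounds
    intro i
    have hik := i.isLt
    have hkk := k.isLt
    beta_reduce
    by_cases h1 : (i:ℕ) < k
    · have := stair_lb G h1
      have := stair_ub G h1
      simp only [dif_pos h1]
      omega
    · by_cases h2 : (i:ℕ) = k
      · simp only [dif_neg h1, dif_pos h2]; omega
      · have hii : (i : ℕ) - ((k:ℕ) + 1) < N - (k:ℕ) := by omega
        have := stair_lb H hii
        have := stair_ub H hii
        simp only [dif_neg h1, dif_neg h2]
        omega


section GlueVals
variable {N : ℕ} (k : Fin (N+1)) (G : Stair k) (H : Stair (N - k)) {i : ℕ}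

lemma stairGlue_dite (h : i < N + 1) :
    (stairGlue k G H).1 ⟨i, h⟩
      = if hik : i < (k:ℕ) then G.1 ⟨i, hik⟩ + 1
        else if _ : i = (k:ℕ) then (k:ℕ)
        else H.1 ⟨i - ((k:ℕ)+1), by have := k.isLt; omega⟩ + ((k:ℕ)+1) := rfl

lemma stairGlue_val_lt (hik : i < (k:ℕ)) (h : i < N + 1) :
    (stairGlue k G H).1 ⟨i, h⟩ = G.1 ⟨i, hik⟩ + 1 := by
  rw [stairGlue_dite, dif_pos hik]

lemma stairGlue_val_eq (hik : i = (k:ℕ)) (h : i < N + 1) :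
    (stairGlue k G H).1 ⟨i, h⟩ = (k:ℕ) := by
  rw [stairGlue_dite, dif_neg (by omega), dif_pos hik]

lemma stairGlue_val_gt (h1 : ¬ i < (k:ℕ)) (h2 : ¬ i = (k:ℕ)) (h : i < N + 1)
    (pf : i - ((k:ℕ)+1) < N - (k:ℕ)) :
    (stairGlue k G H).1 ⟨i, h⟩ = H.1 ⟨i - ((k:ℕ)+1), pf⟩ + ((k:ℕ)+1) := by
  rw [stairGlue_dite, dif_neg h1, dif_neg h2]

end GlueVals

lemma ft_stairGlue (k : Fin (N+1)) (G : Stair k) (H : Stair (N - k)) :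
    ft (stairGlue k G H) = (k : ℕ) := by
  rw [ft, Nat.find_eq_iff]
  constructor
  · exact ⟨k.isLt, stairGlue_val_eq k G H rfl k.isLt⟩
  · rintro i hi ⟨hlt, hval⟩
    have hik : i < (k:ℕ) := hi
    have heq : (stairGlue k G H).1 ⟨i, hlt⟩ = G.1 ⟨i, hik⟩ + 1 := stairGlue_val_lt k G H hik hlt
    rw [heq] at hval
    have := stair_lb G hik
    omega

end FT

lemma stair_heq {a b : ℕ} (h : a = b) (X : Stair a) (Y : Stair b)
    (hXY : ∀ (i : ℕ) (hia : i < a) (hib : i < b), X.1 ⟨i, hia⟩ = Y.1 ⟨i, hib⟩) : HEq X Y := by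
  subst h
  exact heq_of_eq (Subtype.ext (funext fun i => hXY i i.isLt i.isLt))

lemma prod_stair_heq {a b a' b' : ℕ} (h : a = b) (h' : a' = b') {X : Stair a} {Y : Stair b}
    {X' : Stair a'} {Y' : Stair b'} (h1 : HEq X Y) (h2 : HEq X' Y') :
    HEq ((X, X') : Stair a × Stair a') ((Y, Y') : Stair b × Stair b') := by
  subst h; subst h'
  rw [eq_of_heq h1, eq_of_heq h2]

lemma stairGlue_parts {N : ℕ} (F : Stair (N+1)) :
    stairGlue ⟨ft F, ft_lt F⟩ (part1 F) (part2 F) = F := by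
  apply Subtype.ext
  funext i
  have hik := i.isLt
  have hf := ft_lt F
  by_cases h1 : (i:ℕ) < ft F
  · have e1 : (stairGlue ⟨ft F, ft_lt F⟩ (part1 F) (part2 F)).1 i
        = (part1 F).1 ⟨(i:ℕ), h1⟩ + 1 := stairGlue_val_lt _ _ _ h1 i.isLt
    have e2 : (part1 F).1 ⟨(i:ℕ), h1⟩ = F.1 i - 1 := rfl
    have h3 : (i:ℕ) ≤ F.1 i := stair_lb F hik
    have h4 : F.1 i ≠ (i:ℕ) := ft_min F h1 hik
    rw [e1, e2]
    omega
  · by_cases h2 : (i:ℕ) = ft F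
    · have e1 : (stairGlue ⟨ft F, ft_lt F⟩ (part1 F) (part2 F)).1 i = ft F :=
        stairGlue_val_eq _ _ _ h2 i.isLt
      have e3 : F.1 i = F.1 ⟨ft F, ft_lt F⟩ :=
        congrArg F.1 (Fin.ext (show (i:ℕ) = ((⟨ft F, ft_lt F⟩ : Fin (N+1)) : ℕ) from h2))
      rw [e1, e3, ft_spec F]
    · have hge : ft F + 1 ≤ (i:ℕ) := by omega
      have pf : (i:ℕ) - (ft F + 1) < N - ft F := by omega
      have pf2 : ft F + 1 + ((i:ℕ) - (ft F + 1)) < N + 1 := by omega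
      have e1 : (stairGlue ⟨ft F, ft_lt F⟩ (part1 F) (part2 F)).1 i
          = (part2 F).1 ⟨(i:ℕ) - (ft F + 1), pf⟩ + (ft F + 1) :=
        stairGlue_val_gt _ _ _ h1 h2 i.isLt pf
      have e2 : (part2 F).1 ⟨(i:ℕ) - (ft F + 1), pf⟩
          = F.1 ⟨ft F + 1 + ((i:ℕ) - (ft F + 1)), pf2⟩ - (ft F + 1) := rfl
      have e3 : F.1 ⟨ft F + 1 + ((i:ℕ) - (ft F + 1)), pf2⟩ = F.1 i :=
        congrArg F.1 (Fin.ext (show ft F + 1 + ((i:ℕ) - (ft F + 1)) = (i:ℕ) by omega))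
      have h3 : (i:ℕ) ≤ F.1 i := stair_lb F hik
      rw [e1, e2, e3]
      omega

noncomputable def stairEquiv (N : ℕ) :
    Stair (N+1) ≃ (k : Fin (N+1)) × (Stair k × Stair (N - k)) where
  toFun F := ⟨⟨ft F, ft_lt F⟩, part1 F, part2 F⟩
  invFun x := stairGlue x.1 x.2.1 x.2.2
  left_inv F := stairGlue_parts F
  right_inv := by
    rintro ⟨k, G, H⟩
    have hft := ft_stairGlue k G H
    have hkk := k.isLt
    refine Sigma.ext (Fin.ext hft) ?_
    show HEq ((part1 _, part2 _) : Stair _ × Stair _) ((G, H) : Stair _ × Stair _)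
    refine prod_stair_heq (by rw [hft]) (by rw [hft]) ?_ ?_
    · refine stair_heq (by rw [hft]) _ _ ?_
      intro i hia hib'
      have hib : i < (k:ℕ) := by omega
      have hb1 : i < N + 1 := by omega
      have e1 : (part1 (stairGlue k G H)).1 ⟨i, hia⟩ = (stairGlue k G H).1 ⟨i, hb1⟩ - 1 := rfl
      have e2 : (stairGlue k G H).1 ⟨i, hb1⟩ = G.1 ⟨i, hib⟩ + 1 := stairGlue_val_lt k G H hib hb1
      have e3 : G.1 ⟨i, hib⟩ = G.1 ⟨i, hib'⟩ := rfl
      rw [e1, e2, e3]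
      omega
    · refine stair_heq (by rw [hft]) _ _ ?_
      intro j hja hjb'
      have hjb : j < N - (k:ℕ) := by omega
      have hja' : j < N - ft (stairGlue k G H) := hja
      have hb1 : ft (stairGlue k G H) + 1 + j < N + 1 := by omega
      have e1 : (part2 (stairGlue k G H)).1 ⟨j, hja⟩
          = (stairGlue k G H).1 ⟨ft (stairGlue k G H) + 1 + j, hb1⟩ - (ft (stairGlue k G H) + 1) := rfl
      have hc1 : ¬ (ft (stairGlue k G H) + 1 + j < (k:ℕ)) := by omega
      have hc2 : ¬ (ft (stairGlue k G H) + 1 + j = (k:ℕ)) := by omega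
      have pf : (ft (stairGlue k G H) + 1 + j) - ((k:ℕ)+1) < N - (k:ℕ) := by omega
      have e2 : (stairGlue k G H).1 ⟨ft (stairGlue k G H) + 1 + j, hb1⟩
          = H.1 ⟨(ft (stairGlue k G H) + 1 + j) - ((k:ℕ)+1), pf⟩ + ((k:ℕ)+1) :=
        stairGlue_val_gt k G H hc1 hc2 hb1 pf
      have e3 : H.1 ⟨(ft (stairGlue k G H) + 1 + j) - ((k:ℕ)+1), pf⟩ = H.1 ⟨j, hjb'⟩ :=
        congrArg H.1 (Fin.ext (show (ft (stairGlue k G H) + 1 + j) - ((k:ℕ)+1) = j by omega))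
      rw [e1, e2, e3]
      omega

lemma nat_card_sigma {ι : Type} [Fintype ι] (f : ι → Type) [∀ i, Finite (f i)] :
    Nat.card ((i : ι) × f i) = ∑ i, Nat.card (f i) := by
  letI : ∀ i, Fintype (f i) := fun i => Fintype.ofFinite _
  rw [Nat.card_eq_fintype_card, Fintype.card_sigma]
  exact Finset.sum_congr rfl fun i _ => (Nat.card_eq_fintype_card).symm

lemma card_stair : ∀ N, Nat.card (Stair N) = catalan N := by
  intro N
  induction N using Nat.strong_induction_on with
  | _ N ih =>
    match N, ih with
    | 0, _ => simp [Nat.card_unique]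
    | (M+1), ih =>
      rw [Nat.card_congr (stairEquiv M), nat_card_sigma, catalan_succ]
      refine Finset.sum_congr rfl fun k _ => ?_
      rw [Nat.card_prod, ih (k:ℕ) k.isLt, ih (M - (k:ℕ)) (by omega)]

/-! transfer lemmas between `rmax` of an appended permutation and its parts -/

lemma unre_of_lt {v t : ℕ} (h : t < v) : unre v t = t := if_pos h

lemma lt_unre_iff (v t : ℕ) : v < unre v t ↔ v ≤ t := by
  unfold unre; split_ifs <;> omega

lemma unre_inj (v : ℕ) {a b : ℕ} (h : unre v a = unre v b) : a = b := by
  unfold unre at h; split_ifs at h <;> omega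

lemma Iic_castSucc' {N : ℕ} (j : Fin N) :
    Finset.Iic (Fin.castSucc j) = (Finset.Iic j).map Fin.castSuccEmb := by
  ext x
  simp only [Finset.mem_Iic, Finset.mem_map, Fin.castSuccEmb]
  constructor
  · intro hx
    have hx' : (x : ℕ) ≤ (j : ℕ) := hx
    have hxN : (x : ℕ) < N := lt_of_le_of_lt hx' j.isLt
    exact ⟨⟨(x:ℕ), hxN⟩, hx', Fin.ext rfl⟩
  · rintro ⟨y, hy, rfl⟩
    exact Fin.castSucc_le_castSucc_iff.2 hy

lemma rmax_append_castSucc {N : ℕ} (v : Fin (N+1)) (w' : Equiv.Perm (Fin N)) (j : Fin N) :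
    rmax (appendPerm v w') (Fin.castSucc j) = unre (v : ℕ) (rmax w' j) := by
  unfold rmax
  rw [Iic_castSucc', Finset.sup_map]
  have hfun : ((fun l => ((appendPerm v w' l : Fin (N+1)) : ℕ)) ∘ Fin.castSuccEmb)
      = fun l => unre (v:ℕ) ((w' l : ℕ)) := by
    funext l
    simp only [Function.comp_apply]
    rw [show (Fin.castSuccEmb l : Fin (N+1)) = Fin.castSucc l from rfl, appendPerm_castSucc,
      coe_succAbove]
  rw [hfun]
  exact (Finset.comp_sup_eq_sup_comp_of_nonempty (unre_mono (v:ℕ))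
    ⟨j, Finset.mem_Iic.2 le_rfl⟩).symm

lemma rmax_last {N : ℕ} (u : Equiv.Perm (Fin (N+1))) : rmax u (Fin.last N) = N := by
  apply le_antisymm
  · have := rmax_lt u (Fin.last N); omega
  · have h := le_rmax u (Fin.le_last (u.symm (Fin.last N)))
    rwa [Equiv.apply_symm_apply, Fin.val_last] at h

lemma exists_gt_of_lt_rmax {N : ℕ} (u : Equiv.Perm (Fin N)) {i : Fin N}
    (h : (u i : ℕ) < rmax u i) : ∃ l, l < i ∧ u i < u l := by
  obtain ⟨j, hj, hje⟩ := exists_rmax u i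
  have hne : j ≠ i := by intro he; rw [he] at hje; omega
  exact ⟨j, lt_of_le_of_ne hj hne, by rw [Fin.lt_def]; omega⟩

lemma av_append {N : ℕ} (v : Fin (N+1)) (w' : Equiv.Perm (Fin N)) (hw : Av321 w')
    (hv : ∀ i j : Fin N, i < j → w' j < w' i → (w' j : ℕ) < (v : ℕ)) :
    Av321 (appendPerm v w') := by
  intro i j k hij hjk h1 h2
  have hi : i ≠ Fin.last N := Fin.ne_last_of_lt (hij.trans hjk)
  have hj : j ≠ Fin.last N := Fin.ne_last_of_lt hjk
  set i' := i.castPred hi with hi'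
  set j' := j.castPred hj with hj'
  have hii : i = Fin.castSucc i' := (Fin.castSucc_castPred i hi).symm
  have hjj : j = Fin.castSucc j' := (Fin.castSucc_castPred j hj).symm
  have hij' : i' < j' := by
    rw [hii, hjj] at hij; exact Fin.castSucc_lt_castSucc_iff.1 hij
  have hwji : w' j' < w' i' := by
    rw [hii, hjj] at h1
    rw [appendPerm_castSucc, appendPerm_castSucc] at h1
    rw [Fin.lt_def] at h1 ⊢
    rw [coe_succAbove, coe_succAbove] at h1
    exact (unre_lt_iff (v:ℕ)).1 h1
  rcases eq_or_ne k (Fin.last N) with hk | hk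
  · -- k is the last position, value v
    have h2' : (v : ℕ) < (appendPerm v w' j : ℕ) := by
      rw [hk, appendPerm_last] at h2
      exact h2
    rw [hjj, appendPerm_castSucc, coe_succAbove] at h2'
    have : (v:ℕ) ≤ (w' j' : ℕ) := (lt_unre_iff _ _).1 h2'
    have := hv i' j' hij' hwji
    omega
  · set k' := k.castPred hk with hk'
    have hkk : k = Fin.castSucc k' := (Fin.castSucc_castPred k hk).symm
    have hjk' : j' < k' := by
      rw [hjj, hkk] at hjk; exact Fin.castSucc_lt_castSucc_iff.1 hjk
    have hwkj : w' k' < w' j' := by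
      rw [hjj, hkk] at h2
      rw [appendPerm_castSucc, appendPerm_castSucc] at h2
      rw [Fin.lt_def] at h2 ⊢
      rw [coe_succAbove, coe_succAbove] at h2
      exact (unre_lt_iff (v:ℕ)).1 h2
    exact hw hij' hjk' hwji hwkj

lemma av_drop {N : ℕ} (v : Fin (N+1)) (u' : Equiv.Perm (Fin N))
    (h : Av321 (appendPerm v u')) : Av321 u' := by
  intro i j k hij hjk h1 h2
  have tr : ∀ a b : Fin N, u' b < u' a →
      appendPerm v u' (Fin.castSucc b) < appendPerm v u' (Fin.castSucc a) := by
    intro a b hab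
    rw [appendPerm_castSucc, appendPerm_castSucc, Fin.lt_def, coe_succAbove, coe_succAbove]
    exact (unre_lt_iff (v:ℕ)).2 hab
  exact h (Fin.castSucc_lt_castSucc_iff.2 hij) (Fin.castSucc_lt_castSucc_iff.2 hjk)
    (tr i j h1) (tr j k h2)

/-! The key induction: for every staircase function `m` there is a unique
321-avoiding permutation with running maxima `m`. -/

theorem key : ∀ (N : ℕ) (m : Fin N → ℕ), Monotone m → (∀ i : Fin N, (i:ℕ) ≤ m i ∧ m i < N) →
    ∃! w : Equiv.Perm (Fin N), Av321 w ∧ rmax w = m := by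
  intro N
  induction N with
  | zero =>
    intro m _ _
    refine ⟨1, ⟨fun i => i.elim0, funext fun i => i.elim0⟩, fun y _ => Subsingleton.elim y 1⟩
  | succ N ih =>
    intro m hm hmb
    have hmlast : m (Fin.last N) = N := by
      have h1 := (hmb (Fin.last N)).1
      have h2 := (hmb (Fin.last N)).2
      rw [Fin.val_last] at h1
      omega
    have hmono : ∀ a b : Fin (N+1), (a:ℕ) ≤ (b:ℕ) → m a ≤ m b := fun a b h => hm h
    by_cases hc : ∃ p : Fin (N+1), p ≠ Fin.last N ∧ m p = N
    · -- CASE 2: the value N is attained before the last position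
      obtain ⟨p, hpl, hpN⟩ := hc
      have hpN' : (p : ℕ) < N := by
        have := p.isLt
        rcases Nat.lt_or_ge (p:ℕ) N with h | h
        · exact h
        · exact absurd (Fin.ext (by omega : (p:ℕ) = N)) hpl
      -- the set of values of m and its complement
      set R : Finset ℕ := Finset.image m Finset.univ with hR
      set C : Finset ℕ := (Finset.range (N+1)) \ R with hC
      have hNR : N ∈ R := Finset.mem_image.2 ⟨Fin.last N, Finset.mem_univ _, hmlast⟩
      have hCne : C.Nonempty := by
        rw [Finset.sdiff_nonempty]
        intro hsub
        have hRsub : R ⊆ Finset.image m (Finset.univ.erase p) := by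
          intro t ht
          obtain ⟨i, _, rfl⟩ := Finset.mem_image.1 ht
          rcases eq_or_ne i p with rfl | hne
          · exact Finset.mem_image.2 ⟨Fin.last N, Finset.mem_erase.2
              ⟨fun h => hpl h.symm, Finset.mem_univ _⟩, by rw [hmlast, hpN]⟩
          · exact Finset.mem_image.2 ⟨i, Finset.mem_erase.2 ⟨hne, Finset.mem_univ _⟩, rfl⟩
        have h1 : (N+1 : ℕ) ≤ R.card := by
          calc (N+1 : ℕ) = (Finset.range (N+1)).card := (Finset.card_range _).symm
            _ ≤ R.card := Finset.card_le_card hsub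
        have h2 : R.card ≤ (Finset.univ.erase p).card :=
          le_trans (Finset.card_le_card hRsub) (Finset.card_image_le)
        rw [Finset.card_erase_of_mem (Finset.mem_univ p), Finset.card_univ,
          Fintype.card_fin] at h2
        omega
      set v : ℕ := C.max' hCne with hv
      have hvC : v ∈ C := C.max'_mem hCne
      have hvR : v ∉ R := (Finset.mem_sdiff.1 hvC).2
      have hvN1 : v < N + 1 := Finset.mem_range.1 (Finset.mem_sdiff.1 hvC).1
      have hvN : v < N := by
        rcases Nat.lt_or_ge v N with h | h
        · exact h
        · exact absurd (show v = N by omega) (fun he => hvR (he ▸ hNR))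
      have habove : ∀ t, v < t → t < N + 1 → t ∈ R := by
        intro t hvt htN
        by_contra ht
        have : t ∈ C := Finset.mem_sdiff.2 ⟨Finset.mem_range.2 htN, ht⟩
        have := Finset.le_max' C t this
        omega
      have hmnev : ∀ i : Fin (N+1), m i ≠ v := by
        intro i he
        exact hvR (he ▸ Finset.mem_image.2 ⟨i, Finset.mem_univ _, rfl⟩)
      -- pigeonhole: above v, m is strictly above the diagonal (except at the last position)
      have pigeon : ∀ i : Fin (N+1), (i:ℕ) < N → v < m i → (i:ℕ) < m i := by
        intro i hiN hvm
        have h1 := (hmb i).1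
        by_contra hle
        have heq : m i = (i:ℕ) := by omega
        have hip : (i:ℕ) < (p:ℕ) := by
          rcases Nat.lt_or_ge (i:ℕ) (p:ℕ) with h | h
          · exact h
          · have := hmono p i h
            omega
        -- choose, for each value t in (i, N-1], a position attaining it
        have hex : ∀ t : ℕ, t ∈ Finset.Icc ((i:ℕ)+1) (N-1) → ∃ j : Fin (N+1), m j = t := by
          intro t ht
          rw [Finset.mem_Icc] at ht
          obtain ⟨j, _, hj⟩ := Finset.mem_image.1 (habove t (by omega) (by omega))
          exact ⟨j, hj⟩
        choose g hg using hex
        have hmaps : ∀ t ∈ Finset.Icc ((i:ℕ)+1) (N-1),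
            (fun t => if h : t ∈ Finset.Icc ((i:ℕ)+1) (N-1) then ((g t h : Fin (N+1)) : ℕ) else 0) t
              ∈ Finset.Icc ((i:ℕ)+1) (N-2) := by
          intro t ht
          simp only [dif_pos ht]
          have hgt := hg t ht
          obtain ⟨ht1, ht2⟩ := Finset.mem_Icc.1 ht
          rw [Finset.mem_Icc]
          constructor
          · rcases Nat.lt_or_ge (i:ℕ) ((g t ht : Fin (N+1)) : ℕ) with h | h
            · omega
            · have := hmono (g t ht) i h
              omega
          · rcases Nat.lt_or_ge ((g t ht : Fin (N+1)) : ℕ) (p:ℕ) with h | h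
            · omega
            · have := hmono p (g t ht) h
              omega
        have hinj : Set.InjOn
            (fun t => if h : t ∈ Finset.Icc ((i:ℕ)+1) (N-1) then ((g t h : Fin (N+1)) : ℕ) else 0)
            (Finset.Icc ((i:ℕ)+1) (N-1)) := by
          intro t1 ht1 t2 ht2 hee
          simp only [Finset.mem_coe] at ht1 ht2
          simp only [dif_pos ht1, dif_pos ht2] at hee
          have : g t1 ht1 = g t2 ht2 := Fin.ext hee
          rw [← hg t1 ht1, ← hg t2 ht2, this]
        have hcard := Finset.card_le_card_of_injOn _ hmaps hinj
        rw [Nat.card_Icc, Nat.card_Icc] at hcard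
        omega
      -- the reduced staircase
      set m' : Fin N → ℕ := fun j => ren v (m (Fin.castSucc j)) with hm'
      have hm'mono : Monotone m' := fun a b hab =>
        ren_mono v (hm (Fin.castSucc_le_castSucc_iff.2 hab))
      have hm'b : ∀ j : Fin N, (j:ℕ) ≤ m' j ∧ m' j < N := by
        intro j
        have h1 := (hmb (Fin.castSucc j)).1
        have h2 := (hmb (Fin.castSucc j)).2
        rw [Fin.coe_castSucc] at h1
        have hne := hmnev (Fin.castSucc j)
        rcases Nat.lt_or_ge v (m (Fin.castSucc j)) with h | h
        · have := pigeon (Fin.castSucc j) (by rw [Fin.coe_castSucc]; exact j.isLt) h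
          rw [Fin.coe_castSucc] at this
          simp only [hm', ren, if_pos h]
          omega
        · have hlt : m (Fin.castSucc j) < v := by omega
          simp only [hm', ren, if_neg (by omega : ¬ v < m (Fin.castSucc j))]
          omega
      obtain ⟨w', ⟨hw'av, hw'r⟩, hw'uniq⟩ := ih m' hm'mono hm'b
      -- the "nonmax values are < v" claim, for any permutation with rmax = m'
      have smallclaim : ∀ u' : Equiv.Perm (Fin N), rmax u' = m' →
          ∀ j : Fin N, (u' j : ℕ) < m' j → (u' j : ℕ) < v := by
        intro u' hu'r j hnm
        set t := (u' j : ℕ) with htdef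
        by_contra hge
        have htN : t < N := (u' j).isLt
        -- B: t is a value of m'
        have hB : ∃ q : Fin N, m' q = t := by
          have ht1 : v < t + 1 := by omega
          obtain ⟨i0, _, hi0⟩ := Finset.mem_image.1 (habove (t+1) ht1 (by omega))
          have hi0N : ∃ i1 : Fin (N+1), (i1:ℕ) < N ∧ m i1 = t + 1 := by
            rcases Nat.lt_or_ge (i0:ℕ) N with h | h
            · exact ⟨i0, h, hi0⟩
            · -- i0 is the last position; use N-1 instead
              have hi0l : m (Fin.last N) = t + 1 := by
                have : i0 = Fin.last N := Fin.ext (by have := i0.isLt; simp [Fin.val_last]; omega)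
                rwa [this] at hi0
              have htn1 : t + 1 = N := by rw [hmlast] at hi0l; omega
              refine ⟨⟨N-1, by omega⟩, by simp only; omega, ?_⟩
              have hle1 : m p ≤ m ⟨N-1, by omega⟩ := hmono p _ (by simp only; omega)
              have hle2 := (hmb ⟨N-1, by omega⟩).2
              omega
          obtain ⟨i1, hi1N, hi1⟩ := hi0N
          refine ⟨⟨(i1:ℕ), hi1N⟩, ?_⟩
          have : Fin.castSucc (⟨(i1:ℕ), hi1N⟩ : Fin N) = i1 := Fin.ext rfl
          simp only [hm', this, hi1, ren, if_pos (by omega : v < t + 1)]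
          omega
        obtain ⟨q, hq⟩ := hB
        -- A: but a nonmax value is never a value of m'
        have : rmax u' q = t := by rw [hu'r, hq]
        obtain ⟨l, hl, hle⟩ := exists_rmax u' q
        rw [this] at hle
        have : l = j := u'.injective (Fin.ext (by omega))
        subst this
        have : m' l ≤ m' q := hm'mono hl
        omega
      set vf : Fin (N+1) := ⟨v, hvN1⟩ with hvf
      have hvv : (vf : ℕ) = v := rfl
      set w : Equiv.Perm (Fin (N+1)) := appendPerm vf w' with hw
      have hwav : Av321 w := by
        apply av_append vf w' hw'av
        intro i j hij hji
        apply smallclaim w' hw'r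
        have h1 : (w' i : ℕ) ≤ rmax w' j := le_rmax w' (le_of_lt hij)
        have h2 : (w' j : ℕ) < (w' i : ℕ) := hji
        rw [hw'r] at h1
        omega
      have hwr : rmax w = m := by
        funext i
        induction i using Fin.lastCases with
        | last => rw [rmax_last, hmlast]
        | cast j =>
          rw [hw, rmax_append_castSucc, hw'r]
          show unre (vf:ℕ) (ren v (m (Fin.castSucc j))) = m (Fin.castSucc j)
          exact unre_ren v _ (hmnev _)
      refine ⟨w, ⟨hwav, hwr⟩, ?_⟩
      -- uniqueness
      rintro u ⟨huav, hur⟩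
      have hulast : u (Fin.last N) = vf := by
        set t := (u (Fin.last N) : ℕ) with htdef
        have htN : t < N := by
          rcases Nat.lt_or_ge t N with h | h
          · exact h
          · exfalso
            have htN' : t = N := by have := (u (Fin.last N)).isLt; omega
            have : rmax u p = N := by rw [hur, hpN]
            obtain ⟨l, hl, hle⟩ := exists_rmax u p
            rw [this] at hle
            have : l = Fin.last N := u.injective (Fin.ext (by omega))
            subst this
            exact absurd (le_antisymm (Fin.le_last p) hl) hpl
        have htR : t ∉ R := by
          intro htR
          obtain ⟨q, _, hq⟩ := Finset.mem_image.1 htR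
          have : rmax u q = t := by rw [hur, hq]
          obtain ⟨l, hl, hle⟩ := exists_rmax u q
          rw [this] at hle
          have : l = Fin.last N := u.injective (Fin.ext (by omega))
          subst this
          have : q = Fin.last N := le_antisymm (Fin.le_last q) hl
          rw [this, hmlast] at hq
          omega
        have htv : t ≤ v := by
          by_contra hgt
          exact htR (habove t (by omega) (by omega))
        have hvt : v ≤ t := by
          by_contra hlt
          -- v is a value of u at some non-last position; contradiction with Av321
          set z := u.symm vf with hz
          have huz : u z = vf := u.apply_symm_apply vf
          have hzlast : z ≠ Fin.last N := by
            intro he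
            rw [he] at huz
            have : t = v := congrArg Fin.val huz
            omega
          have hzl : z < Fin.last N := lt_of_le_of_ne (Fin.le_last z) hzlast
          have hnm : (u z : ℕ) < rmax u z := by
            rw [huz, hur]
            have h1 : v ≤ rmax u z := by
              have := le_rmax u (le_refl z)
              rw [huz] at this
              exact this
            rw [hur] at h1
            have : m z ≠ v := hmnev z
            show (vf : ℕ) < m z
            omega
          obtain ⟨l, hl, hlu⟩ := exists_gt_of_lt_rmax u hnm
          have hzt : u (Fin.last N) < u z := by
            rw [Fin.lt_def, huz]
            show t < v
            omega
          exact huav hl hzl hlu hzt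
        exact Fin.ext (by omega : t = (vf : ℕ))
      obtain ⟨u', hu, _⟩ := exists_appendPerm u vf hulast
      have hu'av : Av321 u' := av_drop vf u' (hu ▸ huav)
      have hu'r : rmax u' = m' := by
        funext j
        have h1 : rmax u (Fin.castSucc j) = unre (vf:ℕ) (rmax u' j) := by
          rw [hu, rmax_append_castSucc]
        rw [hur] at h1
        have h2 : m (Fin.castSucc j) = unre v (m' j) := by
          simp only [hm']
          exact (unre_ren v _ (hmnev _)).symm
        rw [h2] at h1
        exact (unre_inj v h1.symm)
      rw [hu, hw'uniq u' ⟨hu'av, hu'r⟩]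
    · -- CASE 1: the value N appears only at the last position
      push_neg at hc
      set m' : Fin N → ℕ := fun j => m (Fin.castSucc j) with hm'
      have hm'mono : Monotone m' := fun a b hab => hm (Fin.castSucc_le_castSucc_iff.2 hab)
      have hm'b : ∀ j : Fin N, (j:ℕ) ≤ m' j ∧ m' j < N := by
        intro j
        have h1 := (hmb (Fin.castSucc j)).1
        have h2 := (hmb (Fin.castSucc j)).2
        rw [Fin.coe_castSucc] at h1
        have hne : m (Fin.castSucc j) ≠ N :=
          hc (Fin.castSucc j) (Fin.ne_last_of_lt (Fin.castSucc_lt_last j))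
        have hmj : m' j = m (Fin.castSucc j) := rfl
        exact ⟨by omega, by omega⟩
      obtain ⟨w', ⟨hw'av, hw'r⟩, hw'uniq⟩ := ih m' hm'mono hm'b
      set w : Equiv.Perm (Fin (N+1)) := appendPerm (Fin.last N) w' with hw
      have hwav : Av321 w := by
        apply av_append _ w' hw'av
        intro i j _ _
        rw [Fin.val_last]
        exact (w' j).isLt
      have hwr : rmax w = m := by
        funext i
        induction i using Fin.lastCases with
        | last => rw [rmax_last, hmlast]
        | cast j =>
          rw [hw, rmax_append_castSucc, hw'r]
          rw [Fin.val_last, unre_of_lt (by exact (hm'b j).2)]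
      refine ⟨w, ⟨hwav, hwr⟩, ?_⟩
      rintro u ⟨huav, hur⟩
      have hulast : u (Fin.last N) = Fin.last N := by
        set z := u.symm (Fin.last N) with hz
        have huz : u z = Fin.last N := u.apply_symm_apply _
        have : rmax u z = N := by
          have h1 := le_rmax u (le_refl z)
          rw [huz, Fin.val_last] at h1
          have h2 := rmax_lt u z
          omega
        rw [hur] at this
        have hzlast : z = Fin.last N := by
          by_contra hne
          exact (hc z hne) this
        rw [← hzlast, huz, hzlast]
      obtain ⟨u', hu, _⟩ := exists_appendPerm u (Fin.last N) hulast
      have hu'av : Av321 u' := av_drop _ u' (hu ▸ huav)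
      have hu'r : rmax u' = m' := by
        funext j
        have h1 : rmax u (Fin.castSucc j) = unre N (rmax u' j) := by
          rw [hu, rmax_append_castSucc, Fin.val_last]
        rw [hur] at h1
        rw [unre_of_lt (rmax_lt u' j)] at h1
        exact h1.symm
      rw [hu, hw'uniq u' ⟨hu'av, hu'r⟩]


/-- The number of permutations of `{1,…,n+1}` avoiding 321 is the Catalan number `C (n+1)`. -/
theorem stmt_4 (n : ℕ) :
    Nat.card {w : Equiv.Perm (Fin (n + 1)) // AvoidsPattern w p321} = catalan (n + 1) := by
  rw [← card_stair (n+1)]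
  apply Nat.card_eq_of_bijective
    (f := fun w => (⟨fun i => rmax w.1 i,
      fun a b hab => rmax_mono w.1 hab,
      fun i => ⟨self_le_rmax w.1 i, rmax_lt w.1 i⟩⟩ : Stair (n+1)))
  constructor
  · rintro ⟨w, hw⟩ ⟨w', hw'⟩ he
    have hre : rmax w = rmax w' := by
      funext i
      exact congrFun (congrArg Subtype.val he) i
    obtain ⟨x, _, huniq⟩ := key (n+1) (rmax w) (rmax_mono w)
      (fun i => ⟨self_le_rmax w i, rmax_lt w i⟩)
    have h1 : w = x := huniq w ⟨(avoids_iff w).1 hw, rfl⟩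
    have h2 : w' = x := huniq w' ⟨(avoids_iff w').1 hw', hre.symm⟩
    exact Subtype.ext (h1.trans h2.symm)
  · intro F
    obtain ⟨w, ⟨hav, hr⟩, _⟩ := key (n+1) F.1 F.2.1 F.2.2
    exact ⟨⟨w, (avoids_iff w).2 hav⟩, Subtype.ext (funext fun i => congrFun hr i)⟩
end

section
/- Let C(x) = (1 − 2x − √(1−4x))/(2x^2) be the generating function with C(x) = ∑_{n≥0} C_{n+1} x^n where C_m is the m-th Catalan number (so C(x) = 1 + 2x + 5x^2 + 14x^3 + ...). Define L(x) = (1−x)C(x) − 1 and M(x) = (1−x)^2 C(x) − 1. Then the formal power series G(x) = C(x) + L(x)^2/(1 − x − M(x)) equals 2x / (−1 + 4x − 2x^2 + √(1−4x)) as formal power series, and its coefficients begin 1, 2, 6, 21, 78, 298, 1157, 4539. -/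
open PowerSeries in
theorem cat_gf : (PowerSeries.mk fun n => (catalan n : ℚ)) =
    1 + X * (PowerSeries.mk fun n => (catalan n : ℚ)) ^ 2 := by
  ext n
  cases n with
  | zero => simp
  | succ n =>
    rw [map_add, coeff_succ_X_mul, sq, coeff_mul]
    simp only [coeff_mk, coeff_one, Nat.succ_ne_zero, if_false, zero_add]
    rw [catalan_succ' n]
    push_cast
    rfl

theorem cat4' : catalan 4 = 14 := by
  simp [catalan_succ', Finset.Nat.sum_antidiagonal_eq_sum_range_succ_mk,
    Finset.sum_range_succ, catalan_three, catalan_two]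
theorem cat5' : catalan 5 = 42 := by
  simp [catalan_succ', Finset.Nat.sum_antidiagonal_eq_sum_range_succ_mk,
    Finset.sum_range_succ, cat4', catalan_three, catalan_two]
theorem cat6' : catalan 6 = 132 := by
  simp [catalan_succ', Finset.Nat.sum_antidiagonal_eq_sum_range_succ_mk,
    Finset.sum_range_succ, cat5', cat4', catalan_three, catalan_two]
theorem cat7' : catalan 7 = 429 := by
  simp [catalan_succ', Finset.Nat.sum_antidiagonal_eq_sum_range_succ_mk,
    Finset.sum_range_succ, cat6', cat5', cat4', catalan_three, catalan_two]

open PowerSeries in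
/-- Let `C(x) = ∑ C_{n+1} xⁿ` be the shifted Catalan generating function (so
`2x²C = 1 - 2x - √(1-4x)`), let `S = √(1-4x)` be the formal square root of `1-4x` with
constant term 1, and set `L = (1-x)C - 1`, `M = (1-x)²C - 1`.  Then
`G = C + L²/(1-x-M)` equals `2x/(-1 + 4x - 2x² + √(1-4x))`, and its coefficients begin
1, 2, 6, 21, 78, 298, 1157, 4539. -/
theorem stmt_6 (S C L M G : PowerSeries ℚ)
    (hS : S ^ 2 = 1 - 4 * X) (hS0 : PowerSeries.constantCoeff S = 1)
    (hC : C = PowerSeries.mk fun n => (catalan (n + 1) : ℚ))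
    (hL : L = (1 - X) * C - 1) (hM : M = (1 - X) ^ 2 * C - 1)
    (hG : G = C + L ^ 2 * (1 - X - M)⁻¹) :
    G * (-1 + 4 * X - 2 * X ^ 2 + S) = 2 * X ∧
    PowerSeries.coeff 0 G = 1 ∧ PowerSeries.coeff 1 G = 2 ∧
    PowerSeries.coeff 2 G = 6 ∧ PowerSeries.coeff 3 G = 21 ∧
    PowerSeries.coeff 4 G = 78 ∧ PowerSeries.coeff 5 G = 298 ∧
    PowerSeries.coeff 6 G = 1157 ∧ PowerSeries.coeff 7 G = 4539 := by
  subst hL hM hG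
  set c : PowerSeries ℚ := PowerSeries.mk fun n => (catalan n : ℚ) with hc
  have hcrec : c = 1 + X * c ^ 2 := cat_gf
  have hXC : X * C = c - 1 := by
    ext n
    cases n with
    | zero => simp [hC, hc]
    | succ n => simp [hC, hc, coeff_succ_X_mul, coeff_one]
  have hCc : C = c ^ 2 := by
    have h : X * C = X * c ^ 2 := by linear_combination hXC + hcrec
    exact mul_left_cancel₀ X_ne_zero h
  have hrel : X ^ 2 * C ^ 2 = C - 2 * X * C - 1 := by
    linear_combination (X * C + c + 1) * hXC - hCc
  -- identify S
  have hSval : S = 1 - 2 * X - 2 * X ^ 2 * C := by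
    have hzero : (S - (1 - 2 * X - 2 * X ^ 2 * C)) *
        (S + (1 - 2 * X - 2 * X ^ 2 * C)) = 0 := by
      linear_combination hS - (4 * X ^ 2) * hrel
    have hsum : S + (1 - 2 * X - 2 * X ^ 2 * C) ≠ 0 := by
      intro h
      have := congrArg (constantCoeff) h
      simp [hS0] at this
    exact sub_eq_zero.mp ((mul_eq_zero.mp hzero).resolve_right hsum)
  -- the denominator is invertible
  have hD0 : constantCoeff (1 - X - ((1 - X) ^ 2 * C - 1)) = 1 := by
    have : constantCoeff C = 1 := by simp [hC]
    simp [map_sub, map_pow, map_mul, this]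
  have hDne : constantCoeff (1 - X - ((1 - X) ^ 2 * C - 1)) ≠ 0 := by
    rw [hD0]; exact one_ne_zero
  have hinv : (1 - X - ((1 - X) ^ 2 * C - 1))⁻¹ * (1 - X - ((1 - X) ^ 2 * C - 1)) = 1 :=
    PowerSeries.inv_mul_cancel _ hDne
  -- the key identity G * (1 - X - X*C) = 1
  have hkey : (C + ((1 - X) * C - 1) ^ 2 * (1 - X - ((1 - X) ^ 2 * C - 1))⁻¹) *
      (1 - X - X * C) = 1 := by
    have hDzero : (1 - X - ((1 - X) ^ 2 * C - 1)) ≠ 0 := fun h => hDne (by rw [h]; simp)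
    apply mul_right_cancel₀ hDzero
    linear_combination (((1 - X) * C - 1) ^ 2 * (1 - X - X * C)) * hinv - hrel
  set G := C + ((1 - X) * C - 1) ^ 2 * (1 - X - ((1 - X) ^ 2 * C - 1))⁻¹ with hGdef
  refine ⟨by rw [hSval]; linear_combination 2 * X * hkey, ?_⟩
  -- coefficient extraction
  have ha : ∀ n : ℕ, coeff n (1 - X - X * C) =
      (if n = 0 then 1 else 0) - (if n = 1 then 1 else 0) -
      (if n = 0 then 0 else (catalan n : ℚ)) := by
    intro n
    cases n with
    | zero => simp
    | succ n => simp [hC, coeff_succ_X_mul, coeff_one, coeff_X]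
  have hcoeff : ∀ n : ℕ, ∑ k ∈ Finset.range (n + 1),
      coeff k G * coeff (n - k) (1 - X - X * C) = (if n = 0 then 1 else 0) := by
    intro n
    have h := congrArg (coeff n) hkey
    rw [coeff_mul, Finset.Nat.sum_antidiagonal_eq_sum_range_succ_mk, coeff_one] at h
    exact h
  have hc1 : (catalan 1 : ℚ) = 1 := by norm_num [catalan_one]
  have hc2 : (catalan 2 : ℚ) = 2 := by norm_num [catalan_two]
  have hc3 : (catalan 3 : ℚ) = 5 := by norm_num [catalan_three]
  have hc4 : (catalan 4 : ℚ) = 14 := by norm_num [cat4']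
  have hc5 : (catalan 5 : ℚ) = 42 := by norm_num [cat5']
  have hc6 : (catalan 6 : ℚ) = 132 := by norm_num [cat6']
  have hc7 : (catalan 7 : ℚ) = 429 := by norm_num [cat7']
  have h0 := hcoeff 0
  simp [Finset.sum_range_succ, ha] at h0
  have h0' : coeff 0 G = 1 := by simpa using h0
  have h1 := hcoeff 1
  simp [Finset.sum_range_succ, ha, h0, hc1] at h1
  have h1' : coeff 1 G = 2 := by linarith
  have h2 := hcoeff 2
  simp [Finset.sum_range_succ, ha, h0, h1', hc1, hc2] at h2
  have h2' : coeff 2 G = 6 := by linarith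
  have h3 := hcoeff 3
  simp [Finset.sum_range_succ, ha, h0, h1', h2', hc1, hc2, hc3] at h3
  have h3' : coeff 3 G = 21 := by linarith
  have h4 := hcoeff 4
  simp [Finset.sum_range_succ, ha, h0, h1', h2', h3', hc1, hc2, hc3, hc4] at h4
  have h4' : coeff 4 G = 78 := by linarith
  have h5 := hcoeff 5
  simp [Finset.sum_range_succ, ha, h0, h1', h2', h3', h4', hc1, hc2, hc3, hc4, hc5] at h5
  have h5' : coeff 5 G = 298 := by linarith
  have h6 := hcoeff 6
  simp [Finset.sum_range_succ, ha, h0, h1', h2', h3', h4', h5',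
    hc1, hc2, hc3, hc4, hc5, hc6] at h6
  have h6' : coeff 6 G = 1157 := by linarith
  have h7 := hcoeff 7
  simp [Finset.sum_range_succ, ha, h0, h1', h2', h3', h4', h5', h6',
    hc1, hc2, hc3, hc4, hc5, hc6, hc7] at h7
  have h7' : coeff 7 G = 4539 := by linarith
  exact ⟨h0', h1', h2', h3', h4', h5', h6', h7'⟩
end

section
/- The rational function identity: (3x^5 + x^4 − 5x^3 + 7x^2 − 5x + 1)/(−3x^6 + 4x^5 + 8x^4 − 14x^3 + 15x^2 − 7x + 1) = F(x) + L(x)^2/(1 − x − M(x)) where F(x) = (−x^5 + x^4 + 3x^3 − 4x^2 + 4x − 1)/(x^6 − 4x^5 − 4x^4 + 9x^3 − 11x^2 + 6x − 1), L(x) = (1−x)F(x) − 1, and M(x) = (1−x)^2 F(x) − 1, as an identity of formal power series (equivalently of rational functions). -/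
open PowerSeries in
/-- With `F = (-x⁵ + x⁴ + 3x³ - 4x² + 4x - 1)/(x⁶ - 4x⁵ - 4x⁴ + 9x³ - 11x² + 6x - 1)`,
`L = (1-x)F - 1` and `M = (1-x)²F - 1`, we have
`F + L²/(1 - x - M) = (3x⁵ + x⁴ - 5x³ + 7x² - 5x + 1)/(-3x⁶ + 4x⁵ + 8x⁴ - 14x³ + 15x² - 7x + 1)`
as formal power series over ℚ. -/
theorem stmt_19 (F L M : PowerSeries ℚ)
    (hF : F = (-X ^ 5 + X ^ 4 + 3 * X ^ 3 - 4 * X ^ 2 + 4 * X - 1)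
      * (X ^ 6 - 4 * X ^ 5 - 4 * X ^ 4 + 9 * X ^ 3 - 11 * X ^ 2 + 6 * X - 1)⁻¹)
    (hL : L = (1 - X) * F - 1) (hM : M = (1 - X) ^ 2 * F - 1) :
    F + L ^ 2 * (1 - X - M)⁻¹
      = (3 * X ^ 5 + X ^ 4 - 5 * X ^ 3 + 7 * X ^ 2 - 5 * X + 1)
        * (-3 * X ^ 6 + 4 * X ^ 5 + 8 * X ^ 4 - 14 * X ^ 3 + 15 * X ^ 2 - 7 * X + 1)⁻¹ := by
  set N1 : PowerSeries ℚ := -X ^ 5 + X ^ 4 + 3 * X ^ 3 - 4 * X ^ 2 + 4 * X - 1 with hN1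
  set D1 : PowerSeries ℚ := X ^ 6 - 4 * X ^ 5 - 4 * X ^ 4 + 9 * X ^ 3 - 11 * X ^ 2 + 6 * X - 1 with hD1
  set N2 : PowerSeries ℚ := 3 * X ^ 5 + X ^ 4 - 5 * X ^ 3 + 7 * X ^ 2 - 5 * X + 1 with hN2
  set D2 : PowerSeries ℚ := -3 * X ^ 6 + 4 * X ^ 5 + 8 * X ^ 4 - 14 * X ^ 3 + 15 * X ^ 2 - 7 * X + 1 with hD2
  have hcD1 : constantCoeff (R := ℚ) D1 ≠ 0 := by
    rw [hD1]; simp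
  have hcD2 : constantCoeff (R := ℚ) D2 ≠ 0 := by
    rw [hD2]; simp
  have hD1inv : D1⁻¹ * D1 = 1 := PowerSeries.inv_mul_cancel _ hcD1
  have hD2inv : D2⁻¹ * D2 = 1 := PowerSeries.inv_mul_cancel _ hcD2
  set E : PowerSeries ℚ := 1 - X - M with hE
  have hcF : constantCoeff (R := ℚ) F = 1 := by
    rw [hF, hN1, hD1]
    simp [constantCoeff_inv]
  have hcE : constantCoeff (R := ℚ) E ≠ 0 := by
    rw [hE, hM]
    simp [hcF]
  have hEinv : E⁻¹ * E = 1 := PowerSeries.inv_mul_cancel _ hcE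
  have hED1 : E * D1 = (2 - X) * D1 - (1 - X) ^ 2 * N1 := by
    have h : E * D1 = (2 - X) * D1 - (1 - X) ^ 2 * N1 * (D1⁻¹ * D1) := by
      rw [hE, hM, hF]; ring
    rw [h, hD1inv, mul_one]
  have hmul : D1 * (D1 * E) * D2 ≠ 0 := by
    intro h
    have := congrArg (constantCoeff (R := ℚ)) h
    simp only [map_mul, map_zero] at this
    have hcE' : constantCoeff (R := ℚ) E ≠ 0 := hcE
    rcases mul_eq_zero.1 this with h1 | h1
    · rcases mul_eq_zero.1 h1 with h2 | h2
      · exact hcD1 h2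
      · rcases mul_eq_zero.1 h2 with h3 | h3
        · exact hcD1 h3
        · exact hcE' h3
    · exact hcD2 h1
  apply mul_right_cancel₀ hmul
  have hFD1 : F * D1 = N1 := by
    rw [hF, mul_assoc, hD1inv, mul_one]
  have hLD1 : L * D1 = (1 - X) * N1 - D1 := by
    rw [hL, sub_mul, mul_assoc, hFD1, one_mul]
  -- LHS
  have lhs_eq : (F + L ^ 2 * E⁻¹) * (D1 * (D1 * E) * D2)
      = (F * D1) * (E * D1) * D2 + (L * D1) ^ 2 * (E⁻¹ * E) * D2 := by ring
  have rhs_eq : (N2 * D2⁻¹) * (D1 * (D1 * E) * D2)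
      = N2 * D1 * (E * D1) * (D2⁻¹ * D2) := by ring
  rw [lhs_eq, rhs_eq, hFD1, hLD1, hEinv, hD2inv, hED1, hN1, hD1, hN2, hD2]
  ring
end
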